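/- arXiv:2403.02964 — 6 statements merged into one kernel-verified Lean document; each statement's English description precedes it below -/
import Mathlib

section
/- Let γ ∈ (0,1], t₁ > 0, M ≥ 0, and let x, y : [0, t₁] → ℝ be continuously differentiable with x(0) = y(0) = 0, |x'(t) − 1| ≤ M t^γ and |y'(t)| ≤ M t^γ for all t ∈ [0, t₁]. Define r(t) := √(x(t)² + y(t)²). Then there exist t₂ ∈ (0, t₁] and M' ≥ 0 such that r is differentiable on (0, t₂] with |r'(t) − 1| ≤ M' t^γ for all t ∈ (0, t₂]; in particular r is strictly increasing on [0, t₂]. -/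
open Set

set_option maxHeartbeats 1600000 in
/-- With `x, y` as before and `r t := √(x t ² + y t ²)`, there exist
`t₂ ∈ (0, t₁]` and `M' ≥ 0` such that `r` is differentiable on `(0, t₂]` with
`|r' t - 1| ≤ M' t^γ` there; in particular `r` is strictly increasing on `[0, t₂]`. -/
theorem stmt_1 (γ t₁ M : ℝ) (hγ0 : 0 < γ) (hγ1 : γ ≤ 1) (ht₁ : 0 < t₁) (hM : 0 ≤ M)
    (x y x' y' : ℝ → ℝ)
    (hxd : ∀ t ∈ Icc (0:ℝ) t₁, HasDerivWithinAt x (x' t) (Icc 0 t₁) t)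
    (hyd : ∀ t ∈ Icc (0:ℝ) t₁, HasDerivWithinAt y (y' t) (Icc 0 t₁) t)
    (hx'c : ContinuousOn x' (Icc 0 t₁)) (hy'c : ContinuousOn y' (Icc 0 t₁))
    (hx0 : x 0 = 0) (hy0 : y 0 = 0)
    (hx' : ∀ t ∈ Icc (0:ℝ) t₁, |x' t - 1| ≤ M * t ^ γ)
    (hy' : ∀ t ∈ Icc (0:ℝ) t₁, |y' t| ≤ M * t ^ γ)
    (r : ℝ → ℝ) (hr : ∀ t, r t = Real.sqrt ((x t) ^ 2 + (y t) ^ 2)) :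
    ∃ t₂, 0 < t₂ ∧ t₂ ≤ t₁ ∧ ∃ M', 0 ≤ M' ∧
      (∀ t ∈ Ioc (0:ℝ) t₂, ∃ d : ℝ, HasDerivAt r d t ∧ |d - 1| ≤ M' * t ^ γ) ∧
      StrictMonoOn r (Icc 0 t₂) := by
  -- choose t₂
  set c : ℝ := ((20 * M + 1)⁻¹) ^ (γ⁻¹) with hc
  have hMpos : (0:ℝ) < 20 * M + 1 := by linarith
  have hcpos : 0 < c := Real.rpow_pos_of_pos (by positivity) _
  set t₂ : ℝ := min (t₁ / 2) c with ht₂def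
  have ht₂pos : 0 < t₂ := lt_min (by linarith) hcpos
  have ht₂lt : t₂ < t₁ := lt_of_le_of_lt (min_le_left _ _) (by linarith)
  have ht₂le : t₂ ≤ t₁ := ht₂lt.le
  -- key smallness: M * t₂ ^ γ ≤ 1/20
  have hkey : M * t₂ ^ γ ≤ 1 / 20 := by
    have h1 : t₂ ^ γ ≤ c ^ γ :=
      Real.rpow_le_rpow ht₂pos.le (min_le_right _ _) hγ0.le
    have h2 : c ^ γ = (20 * M + 1)⁻¹ := by
      rw [hc, ← Real.rpow_mul (by positivity), inv_mul_cancel₀ hγ0.ne', Real.rpow_one]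
    rw [h2] at h1
    have : M * t₂ ^ γ ≤ M * (20 * M + 1)⁻¹ := by
      exact mul_le_mul_of_nonneg_left h1 hM
    refine this.trans ?_
    rw [mul_inv_le_iff₀ hMpos]
    linarith
  -- MVT bounds: |x t - t| ≤ (M t^γ) t and |y t| ≤ (M t^γ) t on [0, t₁]
  have hxb : ∀ t ∈ Icc (0:ℝ) t₁, |x t - t| ≤ M * t ^ γ * t := by
    intro t ht
    have hsub : Icc (0:ℝ) t ⊆ Icc 0 t₁ := Icc_subset_Icc le_rfl ht.2
    have := Convex.norm_image_sub_le_of_norm_hasDerivWithin_le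
      (f := fun s => x s - s) (f' := fun s => x' s - 1) (s := Icc 0 t) (C := M * t ^ γ)
      (fun s hs => ((hxd s (hsub hs)).mono hsub).sub (hasDerivWithinAt_id s _))
      (fun s hs => by
        have h1 := hx' s (hsub hs)
        have h2 : s ^ γ ≤ t ^ γ := Real.rpow_le_rpow hs.1 hs.2 hγ0.le
        simpa [Real.norm_eq_abs] using h1.trans (mul_le_mul_of_nonneg_left h2 hM))
      (convex_Icc 0 t) (left_mem_Icc.2 ht.1) (right_mem_Icc.2 ht.1)
    simpa [hx0, Real.norm_eq_abs, abs_of_nonneg ht.1] using this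
  have hyb : ∀ t ∈ Icc (0:ℝ) t₁, |y t| ≤ M * t ^ γ * t := by
    intro t ht
    have hsub : Icc (0:ℝ) t ⊆ Icc 0 t₁ := Icc_subset_Icc le_rfl ht.2
    have := Convex.norm_image_sub_le_of_norm_hasDerivWithin_le
      (f := y) (f' := y') (s := Icc 0 t) (C := M * t ^ γ)
      (fun s hs => (hyd s (hsub hs)).mono hsub)
      (fun s hs => by
        have h1 := hy' s (hsub hs)
        have h2 : s ^ γ ≤ t ^ γ := Real.rpow_le_rpow hs.1 hs.2 hγ0.le
        simpa [Real.norm_eq_abs] using h1.trans (mul_le_mul_of_nonneg_left h2 hM))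
      (convex_Icc 0 t) (left_mem_Icc.2 ht.1) (right_mem_Icc.2 ht.1)
    simpa [hy0, Real.norm_eq_abs, abs_of_nonneg ht.1] using this
  -- key per-point estimate
  have key : ∀ t ∈ Ioc (0:ℝ) t₂, ∃ d, HasDerivAt r d t ∧ |d - 1| ≤ 3 * M * t ^ γ := by
    intro t ht
    obtain ⟨ht0, htt₂⟩ := ht
    have htmem : t ∈ Icc (0:ℝ) t₁ := ⟨ht0.le, htt₂.trans ht₂le⟩
    set ε := M * t ^ γ with hεdef
    have hε0 : 0 ≤ ε := by positivity
    have hε20 : ε ≤ 1 / 20 := by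
      have h : t ^ γ ≤ t₂ ^ γ := Real.rpow_le_rpow ht0.le htt₂ hγ0.le
      calc ε ≤ M * t₂ ^ γ := mul_le_mul_of_nonneg_left h hM
        _ ≤ 1/20 := hkey
    have ha_abs := hxb t htmem
    have hb_abs := hyb t htmem
    have ha'_abs := hx' t htmem
    have hb'_abs := hy' t htmem
    rw [← hεdef] at ha_abs hb_abs ha'_abs hb'_abs
    set a := x t with hadef; set b := y t with hbdef
    set a' := x' t with ha'def; set b' := y' t with hb'def
    have ha := abs_le.1 ha_abs
    have hb := abs_le.1 hb_abs
    have ha' := abs_le.1 ha'_abs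
    have hb' := abs_le.1 hb'_abs
    have hεt : ε * t ≤ (1/20) * t := mul_le_mul_of_nonneg_right hε20 ht0.le
    have hat : (19/20) * t ≤ a := by linarith [ha.1, hεt]
    have ha0 : 0 < a := by linarith
    have hq : 0 < a ^ 2 + b ^ 2 := by positivity
    set ρ := Real.sqrt (a ^ 2 + b ^ 2) with hρdef
    have hρ0 : 0 < ρ := Real.sqrt_pos.2 hq
    have hρ2 : ρ ^ 2 = a ^ 2 + b ^ 2 := Real.sq_sqrt hq.le
    -- the derivative
    have hnhds : Icc (0:ℝ) t₁ ∈ nhds t := Icc_mem_nhds ht0 (lt_of_le_of_lt htt₂ ht₂lt)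
    have hxa : HasDerivAt x a' t := (hxd t htmem).hasDerivAt hnhds
    have hya : HasDerivAt y b' t := (hyd t htmem).hasDerivAt hnhds
    have hu : HasDerivAt (fun s => x s ^ 2 + y s ^ 2) (2 * a * a' + 2 * b * b') t := by
      have h := (hxa.fun_pow 2).add (hya.fun_pow 2)
      refine h.congr_deriv ?_
      push_cast
      ring
    have hru : HasDerivAt (fun s => Real.sqrt (x s ^ 2 + y s ^ 2))
        ((2 * a * a' + 2 * b * b') / (2 * ρ)) t := hu.sqrt hq.ne'
    have hreq : r = fun s => Real.sqrt (x s ^ 2 + y s ^ 2) := funext hr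
    refine ⟨(2 * a * a' + 2 * b * b') / (2 * ρ), by rw [hreq]; exact hru, ?_⟩
    have hdq : (2 * a * a' + 2 * b * b') / (2 * ρ) = (a * a' + b * b') / ρ := by
      field_simp
    rw [hdq]
    -- algebraic estimates
    have hρa : a ≤ ρ := by
      have h1 : |a| ≤ ρ := by
        rw [hρdef, ← Real.sqrt_sq_eq_abs]
        exact Real.sqrt_le_sqrt (le_add_of_nonneg_right (sq_nonneg b))
      exact (le_abs_self a).trans h1
    have hb2 : b ^ 2 ≤ (ε * t) ^ 2 := by
      rw [← sq_abs b]
      exact pow_le_pow_left₀ (abs_nonneg b) hb_abs 2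
    have hra : (ρ - a) * a ≤ b ^ 2 := by
      have h1 : (ρ - a) * a ≤ (ρ - a) * (ρ + a) :=
        mul_le_mul_of_nonneg_left (by linarith) (by linarith)
      have h2 : (ρ - a) * (ρ + a) = b ^ 2 := by linear_combination hρ2
      linarith
    have hraε : ρ - a ≤ ε * t := by
      have s1 : (ε * t) * ((19/20) * t) ≤ (ε * t) * a :=
        mul_le_mul_of_nonneg_left hat (mul_nonneg hε0 ht0.le)
      have s0 : (0:ℝ) ≤ ε * (t * t) * (19/20 - ε) :=
        mul_nonneg (mul_nonneg hε0 (mul_self_nonneg t)) (by linarith)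
      have key1 : (ρ - a) * a ≤ (ε * t) * a := by linarith [hra, hb2, s1, s0]
      exact le_of_mul_le_mul_right key1 ha0
    have htρ : t ≤ (20/19) * ρ := by linarith
    have hεtρ : ε * t ≤ ε * ((20/19) * ρ) := mul_le_mul_of_nonneg_left htρ hε0
    have hεaρ : ε * a ≤ ε * ρ := mul_le_mul_of_nonneg_left hρa hε0
    have haa' : |a * (a' - 1)| ≤ a * ε := by
      rw [abs_mul, abs_of_nonneg ha0.le]
      exact mul_le_mul_of_nonneg_left ha'_abs ha0.le
    have haa'2 := abs_le.1 haa'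
    have hbb' : |b * b'| ≤ ε * t * ε := by
      rw [abs_mul]
      exact mul_le_mul hb_abs hb'_abs (abs_nonneg _) (by positivity)
    have hbb'2 := abs_le.1 hbb'
    have hεtε : ε * t * ε ≤ (1/20) * (ε * t) := by
      have h := mul_le_mul_of_nonneg_left hε20 (mul_nonneg hε0 ht0.le)
      linarith
    have hgoal : |a * a' + b * b' - ρ| ≤ 3 * ε * ρ := by
      rw [abs_le]
      constructor
      · linarith [haa'2.1, haa'2.2, hbb'2.1, hbb'2.2, hεtε, hraε, hεtρ, hεaρ, hρa]
      · linarith [haa'2.1, haa'2.2, hbb'2.1, hbb'2.2, hεtε, hraε, hεtρ, hεaρ, hρa]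
    have h3 : (3 * M) * t ^ γ = 3 * ε := by rw [hεdef]; ring
    have : (a * a' + b * b') / ρ - 1 = (a * a' + b * b' - ρ) / ρ := by
      field_simp
    rw [this, abs_div, abs_of_pos hρ0, div_le_iff₀ hρ0]
    calc |a * a' + b * b' - ρ| ≤ 3 * ε * ρ := hgoal
      _ = 3 * M * t ^ γ * ρ := by rw [hεdef]; ring
  -- conclusion
  refine ⟨t₂, ht₂pos, ht₂le, 3 * M, by positivity, key, ?_⟩
  -- continuity of r on [0, t₂]
  have hxc : ContinuousOn x (Icc 0 t₁) := fun s hs => (hxd s hs).continuousWithinAt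
  have hyc : ContinuousOn y (Icc 0 t₁) := fun s hs => (hyd s hs).continuousWithinAt
  have hsub : Icc (0:ℝ) t₂ ⊆ Icc 0 t₁ := Icc_subset_Icc le_rfl ht₂le
  have hrc : ContinuousOn r (Icc 0 t₂) := by
    have h : ContinuousOn (fun s => Real.sqrt (x s ^ 2 + y s ^ 2)) (Icc 0 t₂) :=
      Real.continuous_sqrt.comp_continuousOn
        (((hxc.mono hsub).pow 2).add ((hyc.mono hsub).pow 2))
    exact h.congr fun s _ => hr s
  apply strictMonoOn_of_deriv_pos (convex_Icc 0 t₂) hrc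
  intro s hs
  rw [interior_Icc] at hs
  obtain ⟨d, hd, hbound⟩ := key s ⟨hs.1, hs.2.le⟩
  rw [hd.deriv]
  have hε : M * s ^ γ ≤ 1 / 20 :=
    le_trans (mul_le_mul_of_nonneg_left
      (Real.rpow_le_rpow hs.1.le hs.2.le hγ0.le) hM) hkey
  have hband := abs_le.1 hbound
  linarith [hband.1, hband.2, hε]
end

section
/- Let 0 < α ≤ 2 and 0 < r₀ < ρ₀, and let S := {r e^{iθ} : 0 < r < ρ₀, 0 < θ < πα} ⊂ ℂ be the circular sector of radius ρ₀ and opening angle πα. Suppose u : ℂ → ℝ is harmonic on S, u(z) ≤ 1 for all z ∈ S, and for every boundary point ζ ∈ ∂S with |ζ| > r₀ one has limsup_{S ∋ z → ζ} u(z) ≤ 0. Then for every z ∈ S with |z| > r₀, u(z) ≤ (8/π)(r₀/|z|)^{1/α}. -/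
open Set

/-- `u : ℂ → ℝ` is harmonic on an open set `U ⊂ ℂ`: it is twice continuously
differentiable on `U` and its Laplacian `∂²u/∂x² + ∂²u/∂y²` vanishes on `U`. -/
def HarmonicOnSet (u : ℂ → ℝ) (U : Set ℂ) : Prop :=
  ContDiffOn ℝ 2 u U ∧
    ∀ z ∈ U,
      iteratedFDeriv ℝ 2 u z ![1, 1] + iteratedFDeriv ℝ 2 u z ![Complex.I, Complex.I] = 0

/-- The open circular sector `{r e^{iθ} : 0 < r < ρ₀, 0 < θ < πα}`. -/
def circSector (ρ₀ α : ℝ) : Set ℂ :=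
  {z | ∃ r θ : ℝ, 0 < r ∧ r < ρ₀ ∧ 0 < θ ∧ θ < Real.pi * α ∧
      z = (r : ℂ) * Complex.exp (θ * Complex.I)}

open Filter Topology Complex


noncomputable def D2 (f : ℂ → ℝ) (z v : ℂ) : ℝ :=
  deriv (deriv (fun t : ℝ => f (z + t • v))) 0

lemma second_deriv_test_max {g : ℝ → ℝ} {U : Set ℝ} (hU : IsOpen U) (h0 : (0:ℝ) ∈ U)
    (hg : ContDiffOn ℝ 2 g U) (hmax : IsLocalMax g 0) :
    deriv (deriv g) 0 ≤ 0 := by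
  by_contra hA
  push_neg at hA
  have hg1 : ContDiffOn ℝ 1 (deriv g) U := hg.deriv_of_isOpen hU (by norm_num)
  have hdg : DifferentiableAt ℝ (deriv g) 0 :=
    (hg1.differentiableOn one_ne_zero).differentiableAt (hU.mem_nhds h0)
  have hd0 : deriv g 0 = 0 := hmax.deriv_eq_zero
  have hslope : Tendsto (slope (deriv g) 0) (𝓝[≠] (0:ℝ)) (𝓝 (deriv (deriv g) 0)) :=
    hasDerivAt_iff_tendsto_slope.mp hdg.hasDerivAt
  have hev : ∀ᶠ t in 𝓝[>] (0:ℝ), 0 < deriv g t := by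
    have h1 : ∀ᶠ t in 𝓝[≠] (0:ℝ), 0 < slope (deriv g) 0 t :=
      hslope.eventually_const_lt hA
    have h2 : ∀ᶠ t in 𝓝[>] (0:ℝ), 0 < slope (deriv g) 0 t :=
      h1.filter_mono (nhdsWithin_mono _ (fun x hx => ne_of_gt hx))
    filter_upwards [h2, self_mem_nhdsWithin] with t ht ht0
    have : slope (deriv g) 0 t = deriv g t / t := by
      simp [slope, hd0, div_eq_inv_mul]
    rw [this] at ht
    have := mul_pos ht (show (0:ℝ) < t from ht0)
    rwa [div_mul_cancel₀ _ (ne_of_gt ht0)] at this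
  obtain ⟨r, hr, hball⟩ := Metric.isOpen_iff.mp hU 0 h0
  have hmax' : ∀ᶠ t in 𝓝 (0:ℝ), g t ≤ g 0 := hmax
  obtain ⟨r2, hr2, hball2⟩ := Metric.eventually_nhds_iff_ball.mp hmax'
  obtain ⟨b, hb, hIoc⟩ := mem_nhdsGT_iff_exists_Ioc_subset.mp hev
  set δ : ℝ := min (min (r/2) (r2/2)) b with hδdef
  have hδpos : 0 < δ := by
    have : (0:ℝ) < b := hb
    positivity
  have hδU : Icc (0:ℝ) δ ⊆ U := by
    intro t ht
    apply hball
    simp only [Metric.mem_ball, Real.dist_eq, abs_sub_comm, sub_zero]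
    rw [_root_.abs_of_nonneg ht.1]
    calc t ≤ δ := ht.2
    _ ≤ r/2 := le_trans (min_le_left _ _) (min_le_left _ _)
    _ < r := by linarith
  have hmono : StrictMonoOn g (Icc (0:ℝ) δ) := by
    apply strictMonoOn_of_deriv_pos (convex_Icc 0 δ)
    · exact hg.continuousOn.mono hδU
    · intro t ht
      rw [interior_Icc] at ht
      exact hIoc ⟨ht.1, le_trans (le_of_lt ht.2) (min_le_right _ _)⟩
  have h1 : g 0 < g δ := hmono ⟨le_rfl, hδpos.le⟩ ⟨hδpos.le, le_rfl⟩ hδpos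
  have h2 : g δ ≤ g 0 := by
    apply hball2
    simp only [Metric.mem_ball, Real.dist_eq, sub_zero]
    rw [_root_.abs_of_nonneg hδpos.le]
    calc δ ≤ r2/2 := le_trans (min_le_left _ _) (min_le_right _ _)
    _ < r2 := by linarith
  linarith


lemma hasDerivAt_line (z v : ℂ) (t : ℝ) : HasDerivAt (fun s : ℝ => z + s • v) v t := by
  simpa using ((hasDerivAt_id t).smul_const v).const_add z

lemma line_contDiff (z v : ℂ) : ContDiff ℝ 2 (fun s : ℝ => z + s • v) :=
  contDiff_const.add (contDiff_id.smul contDiff_const)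

lemma eventually_line_mem {U : Set ℂ} (hU : IsOpen U) {z : ℂ} (hz : z ∈ U) (v : ℂ) :
    ∀ᶠ t : ℝ in 𝓝 0, z + t • v ∈ U := by
  have hc : ContinuousAt (fun s : ℝ => z + s • v) 0 := ((line_contDiff z v).continuous).continuousAt
  have h0 : (fun s : ℝ => z + s • v) 0 = z := by simp
  exact hc (by rw [h0]; exact hU.mem_nhds hz)

lemma lineD2 {U : Set ℂ} (hU : IsOpen U) {f : ℂ → ℝ} (hf : ContDiffOn ℝ 2 f U)
    {z : ℂ} (hz : z ∈ U) (v : ℂ) :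
    D2 f z v = fderiv ℝ (fderiv ℝ f) z v v := by
  have hfd : ContDiffOn ℝ 1 (fderiv ℝ f) U := hf.fderiv_of_isOpen hU (by norm_num)
  have hdf : ∀ y ∈ U, DifferentiableAt ℝ f y := fun y hy =>
    ((hf.differentiableOn (by norm_num)).differentiableAt (hU.mem_nhds hy))
  have key : ∀ᶠ t : ℝ in 𝓝 0,
      deriv (fun s : ℝ => f (z + s • v)) t = fderiv ℝ f (z + t • v) v := by
    filter_upwards [eventually_line_mem hU hz v] with t ht
    exact ((hdf _ ht).hasFDerivAt.comp_hasDerivAt t (hasDerivAt_line z v t)).deriv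
  have h2 : HasDerivAt (fun t : ℝ => fderiv ℝ f (z + t • v))
      (fderiv ℝ (fderiv ℝ f) z v) 0 := by
    have hdd : DifferentiableAt ℝ (fderiv ℝ f) z :=
      (hfd.differentiableOn one_ne_zero).differentiableAt (hU.mem_nhds hz)
    have := hdd.hasFDerivAt.comp_hasDerivAt_of_eq 0 (hasDerivAt_line z v 0) (by simp)
    exact this
  have h3 : HasDerivAt (fun t : ℝ => fderiv ℝ f (z + t • v) v)
      ((fderiv ℝ (fderiv ℝ f) z v) v) 0 := by
    have := h2.clm_apply (hasDerivAt_const 0 v)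
    simpa using this
  unfold D2
  rw [Filter.EventuallyEq.deriv_eq key]
  exact h3.deriv

lemma D2_add_smul {U : Set ℂ} (hU : IsOpen U) {f g : ℂ → ℝ}
    (hf : ContDiffOn ℝ 2 f U) (hg : ContDiffOn ℝ 2 g U) {z : ℂ} (hz : z ∈ U) (c : ℝ) (v : ℂ) :
    D2 (fun x => f x + c * g x) z v = D2 f z v + c * D2 g z v := by
  have hcg : ContDiffOn ℝ 2 (fun x => c * g x) U := hg.const_smul c
  have hsum : ContDiffOn ℝ 2 (fun x => f x + c * g x) U := hf.add hcg
  rw [lineD2 hU hf hz v, lineD2 hU hg hz v, lineD2 hU hsum hz v]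
  have hdf : DifferentiableAt ℝ (fderiv ℝ f) z :=
    ((hf.fderiv_of_isOpen hU (by norm_num) :
      ContDiffOn ℝ 1 (fderiv ℝ f) U).differentiableOn one_ne_zero).differentiableAt (hU.mem_nhds hz)
  have hdg : DifferentiableAt ℝ (fderiv ℝ g) z :=
    ((hg.fderiv_of_isOpen hU (by norm_num) :
      ContDiffOn ℝ 1 (fderiv ℝ g) U).differentiableOn one_ne_zero).differentiableAt (hU.mem_nhds hz)
  have hev : (fderiv ℝ (fun x => f x + c * g x)) =ᶠ[𝓝 z]
      (fun y => fderiv ℝ f y + c • fderiv ℝ g y) := by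
    filter_upwards [hU.eventually_mem hz] with y hy
    have h1 : DifferentiableAt ℝ f y := (hf.differentiableOn (by norm_num)).differentiableAt (hU.mem_nhds hy)
    have h2 : DifferentiableAt ℝ g y := (hg.differentiableOn (by norm_num)).differentiableAt (hU.mem_nhds hy)
    have : fderiv ℝ (fun x => f x + c * g x) y = fderiv ℝ f y + fderiv ℝ (fun x => c * g x) y :=
      fderiv_add h1 (h2.const_mul c)
    rw [this, fderiv_const_mul h2]
  rw [hev.fderiv_eq]
  have : fderiv ℝ (fun y => fderiv ℝ f y + c • fderiv ℝ g y) z =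
      fderiv ℝ (fderiv ℝ f) z + fderiv ℝ (fun y => c • fderiv ℝ g y) z :=
    fderiv_add hdf (hdg.const_smul c)
  rw [this, fderiv_fun_const_smul hdg]
  simp


noncomputable def qq : ℂ → ℝ := fun z => z.re ^ 2 + z.im ^ 2

lemma qq_contDiff : ContDiff ℝ 2 qq :=
  (Complex.reCLM.contDiff.pow 2).add (Complex.imCLM.contDiff.pow 2)

lemma qq_nonneg (z : ℂ) : 0 ≤ qq z := by unfold qq; positivity

lemma qq_le {z : ℂ} {R : ℝ} (h : ‖z‖ ≤ R) : qq z ≤ R ^ 2 := by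
  have h1 : qq z = ‖z‖ ^ 2 := by
    rw [Complex.sq_norm, Complex.normSq_apply]; unfold qq; ring
  rw [h1]
  exact pow_le_pow_left₀ (norm_nonneg z) h 2

lemma D2_qq_one (z : ℂ) : D2 qq z 1 = 2 := by
  have hfun : (fun t : ℝ => qq (z + t • (1:ℂ))) = fun t : ℝ => (z.re + t) ^ 2 + z.im ^ 2 := by
    funext t
    simp [qq, Complex.add_re, Complex.add_im, Complex.smul_re, Complex.smul_im]
  unfold D2
  rw [hfun]
  have hd1 : ∀ t : ℝ, HasDerivAt (fun t : ℝ => (z.re + t) ^ 2 + z.im ^ 2) (2 * (z.re + t)) t := by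
    intro t
    have := (((hasDerivAt_id t).const_add z.re).pow 2).add_const (z.im ^ 2)
    simpa using this
  have : deriv (fun t : ℝ => (z.re + t) ^ 2 + z.im ^ 2) = fun t => 2 * (z.re + t) :=
    funext fun t => (hd1 t).deriv
  rw [this]
  have : HasDerivAt (fun t : ℝ => 2 * (z.re + t)) 2 0 := by
    simpa using ((hasDerivAt_id (0:ℝ)).const_add z.re).const_mul 2
  exact this.deriv

lemma D2_qq_I (z : ℂ) : D2 qq z Complex.I = 2 := by
  have hfun : (fun t : ℝ => qq (z + t • Complex.I)) = fun t : ℝ => (z.im + t) ^ 2 + z.re ^ 2 := by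
    funext t
    simp [qq, Complex.add_re, Complex.add_im, Complex.smul_re, Complex.smul_im]
    ring
  unfold D2
  rw [hfun]
  have hd1 : ∀ t : ℝ, HasDerivAt (fun t : ℝ => (z.im + t) ^ 2 + z.re ^ 2) (2 * (z.im + t)) t := by
    intro t
    have := (((hasDerivAt_id t).const_add z.im).pow 2).add_const (z.re ^ 2)
    simpa using this
  have : deriv (fun t : ℝ => (z.im + t) ^ 2 + z.re ^ 2) = fun t => 2 * (z.im + t) :=
    funext fun t => (hd1 t).deriv
  rw [this]
  have : HasDerivAt (fun t : ℝ => 2 * (z.im + t)) 2 0 := by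
    simpa using ((hasDerivAt_id (0:ℝ)).const_add z.im).const_mul 2
  exact this.deriv

lemma maxPrinciple {Ω : Set ℂ} (hΩo : IsOpen Ω) {R : ℝ}
    (hR : ∀ z ∈ Ω, ‖z‖ ≤ R)
    {w : ℂ → ℝ} (hw : ContDiffOn ℝ 2 w Ω) (hwb : ∀ z ∈ Ω, w z ≤ 1)
    (hΔ : ∀ z ∈ Ω, 0 ≤ D2 w z 1 + D2 w z Complex.I)
    (hbd : ∀ ζ ∈ closure Ω, ζ ∉ Ω → ∀ ε > 0, ∀ᶠ x in 𝓝[Ω] ζ, w x ≤ ε) :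
    ∀ z ∈ Ω, w z ≤ 0 := by
  intro z₀ hz₀
  have hR0 : 0 ≤ R := le_trans (norm_nonneg z₀) (hR z₀ hz₀)
  suffices h : ∀ ε > 0, w z₀ ≤ ε * (1 + R ^ 2) by
    by_contra hc
    push_neg at hc
    have h1R : (0:ℝ) < 1 + R ^ 2 := by positivity
    have := h (w z₀ / (2 * (1 + R ^ 2))) (by positivity)
    have heq : w z₀ / (2 * (1 + R ^ 2)) * (1 + R ^ 2) = w z₀ / 2 := by
      field_simp
    rw [heq] at this
    linarith
  intro ε hε
  set wε := fun z => w z + ε * qq z with hwεdef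
  have hq2 : ContDiff ℝ 2 (fun z => ε * qq z) := contDiff_const.mul qq_contDiff
  have hwε : ContDiffOn ℝ 2 wε Ω := hw.add hq2.contDiffOn
  have hbddA : BddAbove (wε '' Ω) := by
    refine ⟨1 + ε * R ^ 2, ?_⟩
    rintro y ⟨x, hx, rfl⟩
    have h1 : ε * qq x ≤ ε * R ^ 2 := mul_le_mul_of_nonneg_left (qq_le (hR x hx)) hε.le
    exact add_le_add (hwb x hx) h1
  have hne : (wε '' Ω).Nonempty := ⟨wε z₀, mem_image_of_mem _ hz₀⟩
  set M := sSup (wε '' Ω) with hM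
  obtain ⟨y, -, hyt, hymem⟩ := exists_seq_tendsto_sSup hne hbddA
  have hmem' : ∀ n, ∃ x, x ∈ Ω ∧ wε x = y n := by
    intro n
    rcases hymem n with ⟨x, hx, hxy⟩
    exact ⟨x, hx, hxy⟩
  choose zs hzs hws using hmem'
  have hb : Bornology.IsBounded Ω := by
    apply (Metric.isBounded_closedBall (x := (0:ℂ)) (r := R)).subset
    intro z hz
    simpa [Metric.mem_closedBall, Complex.dist_eq] using hR z hz
  have hcomp : IsCompact (closure Ω) := hb.isCompact_closure
  obtain ⟨ζ, hζ, φ, hφ, hφt⟩ := hcomp.tendsto_subseq (fun n => subset_closure (hzs n))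
  have hMt : Tendsto (fun n => wε (zs (φ n))) atTop (𝓝 M) := by
    have heq : (fun n => wε (zs (φ n))) = y ∘ φ := funext fun n => hws (φ n)
    rw [heq]
    exact hyt.comp hφ.tendsto_atTop
  by_cases hζΩ : ζ ∈ Ω
  · exfalso
    have hcont : ContinuousAt wε ζ := hwε.continuousOn.continuousAt (hΩo.mem_nhds hζΩ)
    have hMeq : wε ζ = M := tendsto_nhds_unique (hcont.tendsto.comp hφt) hMt
    have hlocmax : IsLocalMax wε ζ := by
      filter_upwards [hΩo.eventually_mem hζΩ] with x hx
      rw [hMeq]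
      exact le_csSup hbddA (mem_image_of_mem _ hx)
    have key : ∀ v : ℂ, D2 wε ζ v ≤ 0 := by
      intro v
      set V : Set ℝ := (fun t : ℝ => ζ + t • v) ⁻¹' Ω with hV
      have hVo : IsOpen V := hΩo.preimage (line_contDiff ζ v).continuous
      have h0V : (0:ℝ) ∈ V := by
        simp only [hV, mem_preimage]
        simpa using hζΩ
      have hgC : ContDiffOn ℝ 2 (fun t : ℝ => wε (ζ + t • v)) V :=
        hwε.comp (line_contDiff ζ v).contDiffOn (fun t ht => ht)
      have hgm : IsLocalMax (fun t : ℝ => wε (ζ + t • v)) 0 := by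
        have hlm2 : IsLocalMax wε ((fun t : ℝ => ζ + t • v) 0) := by simpa using hlocmax
        have := IsLocalMax.comp_continuous (g := fun t : ℝ => ζ + t • v) (b := (0:ℝ)) hlm2
          ((line_contDiff ζ v).continuous.continuousAt (x := (0:ℝ)))
        exact this
      exact second_deriv_test_max hVo h0V hgC hgm
    have h1 := key 1
    have h2 := key Complex.I
    have e1 : D2 wε ζ 1 = D2 w ζ 1 + ε * D2 qq ζ 1 :=
      D2_add_smul hΩo hw qq_contDiff.contDiffOn hζΩ ε 1
    have e2 : D2 wε ζ Complex.I = D2 w ζ Complex.I + ε * D2 qq ζ Complex.I :=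
      D2_add_smul hΩo hw qq_contDiff.contDiffOn hζΩ ε Complex.I
    rw [e1, D2_qq_one] at h1
    rw [e2, D2_qq_I] at h2
    have := hΔ ζ hζΩ
    nlinarith
  · have hev := hbd ζ hζ hζΩ ε hε
    have hzt : Tendsto (fun n => zs (φ n)) atTop (𝓝[Ω] ζ) := by
      rw [tendsto_nhdsWithin_iff]
      exact ⟨hφt, Eventually.of_forall (fun n => hzs (φ n))⟩
    have hevn : ∀ᶠ n in atTop, w (zs (φ n)) ≤ ε := hzt.eventually hev
    have hMle : M ≤ ε + ε * R ^ 2 := by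
      apply le_of_tendsto hMt
      filter_upwards [hevn] with n hn
      have h1 : ε * qq (zs (φ n)) ≤ ε * R ^ 2 :=
        mul_le_mul_of_nonneg_left (qq_le (hR _ (hzs (φ n)))) hε.le
      exact add_le_add hn h1
    have hle : wε z₀ ≤ M := le_csSup hbddA (mem_image_of_mem _ hz₀)
    have hq : 0 ≤ ε * qq z₀ := mul_nonneg hε.le (qq_nonneg z₀)
    have : w z₀ ≤ wε z₀ := by
      simp only [hwεdef]
      linarith
    calc w z₀ ≤ M := le_trans this hle
    _ ≤ ε * (1 + R ^ 2) := by linarith [hMle]; 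


noncomputable def ee (α : ℝ) : ℂ := Complex.exp (-((Real.pi * α / 2 : ℝ) : ℂ) * Complex.I)

def OO₁ (α : ℝ) : Set ℂ := {z | z * ee α ∈ Complex.slitPlane}

noncomputable def PP (α : ℝ) (z : ℂ) : ℂ :=
  Complex.exp (((1/α : ℝ) : ℂ) * (Complex.log (z * ee α) + ((Real.pi * α / 2 : ℝ) : ℂ) * Complex.I))

noncomputable def ImL (α : ℝ) (z : ℂ) : ℝ := (Complex.log (z * ee α)).im + Real.pi * α / 2

lemma log_rot {α : ℝ} (hα0 : 0 < α) (hα2 : α ≤ 2) {r θ : ℝ} (hr : 0 < r) (hθ0 : 0 < θ)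
    (hθπ : θ < Real.pi * α) :
    ((r:ℂ) * Complex.exp (θ * Complex.I)) * ee α ∈ Complex.slitPlane ∧
    Complex.log (((r:ℂ) * Complex.exp (θ * Complex.I)) * ee α) =
      ((Real.log r : ℝ) : ℂ) + ((θ - Real.pi * α / 2 : ℝ) : ℂ) * Complex.I := by
  have hπ := Real.pi_pos
  have hφ₀pos : 0 < Real.pi * α / 2 := by positivity
  have hφ₀le : Real.pi * α / 2 ≤ Real.pi := by nlinarith
  have hψl : -Real.pi < θ - Real.pi * α / 2 := by linarith
  have hψr : θ - Real.pi * α / 2 < Real.pi := by nlinarith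
  have hexp : (θ:ℂ) * Complex.I + -((Real.pi * α / 2 : ℝ) : ℂ) * Complex.I
      = ((θ - Real.pi * α / 2 : ℝ) : ℂ) * Complex.I := by push_cast; ring
  have hw : ((r:ℂ) * Complex.exp (θ * Complex.I)) * ee α
      = (r:ℂ) * Complex.exp (((θ - Real.pi * α / 2 : ℝ) : ℂ) * Complex.I) := by
    rw [ee, mul_assoc, ← Complex.exp_add, hexp]
  have harg : Complex.arg ((r:ℂ) * Complex.exp (((θ - Real.pi * α / 2 : ℝ) : ℂ) * Complex.I))
      = θ - Real.pi * α / 2 := by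
    rw [Complex.exp_mul_I]
    exact Complex.arg_mul_cos_add_sin_mul_I hr ⟨hψl, hψr.le⟩
  have habs : ‖(r:ℂ) * Complex.exp (((θ - Real.pi * α / 2 : ℝ) : ℂ) * Complex.I)‖ = r := by
    rw [norm_mul, Complex.norm_exp]
    simp [abs_of_pos hr]
  have hne : (r:ℂ) * Complex.exp (((θ - Real.pi * α / 2 : ℝ) : ℂ) * Complex.I) ≠ 0 :=
    mul_ne_zero (by exact_mod_cast hr.ne') (Complex.exp_ne_zero _)
  constructor
  · rw [hw, Complex.mem_slitPlane_iff_arg, harg]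
    exact ⟨hψr.ne, hne⟩
  · rw [hw]
    apply Complex.ext
    · rw [Complex.log_re, habs]
      simp
    · rw [Complex.log_im, harg]
      simp

lemma PP_spec {α : ℝ} (hα0 : 0 < α) (hα2 : α ≤ 2) {r θ : ℝ} (hr : 0 < r) (hθ0 : 0 < θ)
    (hθπ : θ < Real.pi * α) :
    PP α ((r:ℂ) * Complex.exp (θ * Complex.I)) =
      Complex.exp (((Real.log r / α : ℝ) : ℂ) + ((θ / α : ℝ) : ℂ) * Complex.I) := by
  rw [PP, (log_rot hα0 hα2 hr hθ0 hθπ).2]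
  congr 1
  have hα : (α:ℂ) ≠ 0 := by exact_mod_cast hα0.ne'
  push_cast
  field_simp
  ring

lemma exp_form_abs (x y : ℝ) :
    ‖Complex.exp ((x:ℂ) + (y:ℂ) * Complex.I)‖ = Real.exp x := by
  rw [Complex.norm_exp]
  congr 1
  simp

lemma exp_form_im (x y : ℝ) :
    (Complex.exp ((x:ℂ) + (y:ℂ) * Complex.I)).im = Real.exp x * Real.sin y := by
  rw [Complex.exp_im]
  congr 2 <;> simp

lemma sector_eq {α ρ₀ : ℝ} (hα0 : 0 < α) (hα2 : α ≤ 2) :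
    circSector ρ₀ α =
      {z | z ∈ OO₁ α ∧ ‖z‖ < ρ₀ ∧ ImL α z ∈ Ioo 0 (Real.pi * α)} := by
  ext z
  constructor
  · rintro ⟨r, θ, hr, hrρ, hθ0, hθπ, rfl⟩
    obtain ⟨hslit, hlog⟩ := log_rot hα0 hα2 hr hθ0 hθπ
    have habs : ‖(r:ℂ) * Complex.exp ((θ:ℝ) * Complex.I)‖ = r := by
      rw [norm_mul, Complex.norm_exp]
      simp [abs_of_pos hr]
    refine ⟨hslit, by rwa [habs], ?_⟩
    rw [ImL, hlog]
    simp only [Complex.add_im, Complex.ofReal_re, Complex.ofReal_im, Complex.mul_im,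
      Complex.I_re, Complex.I_im]
    constructor <;> [skip; skip] <;> · simp; linarith
  · rintro ⟨hslit, habs, h0, h1⟩
    have hzne : z ≠ 0 := by
      intro h
      apply Complex.slitPlane_ne_zero hslit
      rw [h, zero_mul]
    refine ⟨‖z‖, ImL α z, ?_, by rwa [],  h0, h1, ?_⟩
    · exact (norm_pos_iff.mpr hzne)
    · have habse : ‖ee α‖ = 1 := by
        rw [ee, Complex.norm_exp]
        simp
      have h2 : z * ee α = (‖z‖ : ℂ) * Complex.exp ((Complex.arg (z * ee α) : ℝ) * Complex.I) := by
        have := Complex.norm_mul_exp_arg_mul_I (z * ee α)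
        rw [norm_mul, habse, mul_one] at this
        exact this.symm
      have h3 : z = (z * ee α) * Complex.exp (((Real.pi * α / 2 : ℝ) : ℂ) * Complex.I) := by
        rw [ee, mul_assoc, ← Complex.exp_add]
        simp
      have h4 : (Complex.arg (z * ee α) : ℂ) * Complex.I + ((Real.pi * α / 2 : ℝ) : ℂ) * Complex.I
          = ((ImL α z : ℝ) : ℂ) * Complex.I := by
        simp only [ImL, Complex.log_im]
        push_cast
        ring
      conv_lhs => rw [h3, h2]
      rw [mul_assoc, ← Complex.exp_add, h4]

lemma OO₁_open {α : ℝ} : IsOpen (OO₁ α) :=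
  Complex.isOpen_slitPlane.preimage (continuous_id.mul continuous_const)

lemma clog_contOn {α : ℝ} : ContinuousOn (fun z => Complex.log (z * ee α)) (OO₁ α) := by
  intro z hz
  have h1 : ContinuousAt (fun z : ℂ => z * ee α) z := (continuous_id.mul continuous_const).continuousAt
  have h2 : ContinuousAt Complex.log (z * ee α) := continuousAt_clog hz
  have h3 := ContinuousAt.comp (f := fun z : ℂ => z * ee α) h2 h1
  exact h3.continuousWithinAt

lemma ImL_contOn {α : ℝ} : ContinuousOn (ImL α) (OO₁ α) :=
  (Complex.continuous_im.comp_continuousOn clog_contOn).add continuousOn_const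

lemma sector_open {α ρ₀ : ℝ} (hα0 : 0 < α) (hα2 : α ≤ 2) : IsOpen (circSector ρ₀ α) := by
  rw [sector_eq hα0 hα2]
  have h1 : IsOpen (OO₁ α ∩ (ImL α) ⁻¹' (Ioo 0 (Real.pi * α))) :=
    ContinuousOn.isOpen_inter_preimage ImL_contOn OO₁_open isOpen_Ioo
  have h2 : IsOpen ((fun z : ℂ => ‖z‖) ⁻¹' (Iio ρ₀)) := isOpen_Iio.preimage continuous_norm
  have heq : {z | z ∈ OO₁ α ∧ ‖z‖ < ρ₀ ∧ ImL α z ∈ Ioo 0 (Real.pi * α)} =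
      (OO₁ α ∩ (ImL α) ⁻¹' (Ioo 0 (Real.pi * α))) ∩ (fun z : ℂ => ‖z‖) ⁻¹' (Iio ρ₀) := by
    ext x
    simp only [mem_setOf_eq, mem_inter_iff, mem_preimage, mem_Iio]
    tauto
  rw [heq]
  exact h1.inter h2

lemma PP_contOn {α : ℝ} : ContinuousOn (PP α) (OO₁ α) := by
  apply Complex.continuous_exp.comp_continuousOn
  exact continuousOn_const.mul (clog_contOn.add continuousOn_const)

def OO (α : ℝ) : Set ℂ := {z | z ∈ OO₁ α ∧ 0 < (PP α z).im}

lemma OO_open {α : ℝ} : IsOpen (OO α) := by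
  have heq : OO α = OO₁ α ∩ (fun z => (PP α z).im) ⁻¹' (Ioi 0) := rfl
  rw [heq]
  exact ContinuousOn.isOpen_inter_preimage
    (Complex.continuous_im.comp_continuousOn PP_contOn) OO₁_open isOpen_Ioi

lemma sector_subset_OO {α ρ₀ : ℝ} (hα0 : 0 < α) (hα2 : α ≤ 2) :
    circSector ρ₀ α ⊆ OO α := by
  rintro z ⟨r, θ, hr, hρ, hθ0, hθπ, rfl⟩
  refine ⟨(log_rot hα0 hα2 hr hθ0 hθπ).1, ?_⟩
  rw [PP_spec hα0 hα2 hr hθ0 hθπ, exp_form_im]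
  have h1 : 0 < θ / α := div_pos hθ0 hα0
  have h2 : θ / α < Real.pi := by
    rw [div_lt_iff₀ hα0]
    linarith [mul_comm Real.pi α]
  have h3 : 0 < Real.sin (θ / α) := Real.sin_pos_of_pos_of_lt_pi h1 h2
  positivity

lemma PP_diffAt {α : ℝ} {z : ℂ} (hz : z ∈ OO₁ α) : DifferentiableAt ℂ (PP α) z := by
  have hm : DifferentiableAt ℂ (fun z : ℂ => z * ee α) z := differentiableAt_id.mul_const _
  have hl : DifferentiableAt ℂ (fun z : ℂ => Complex.log (z * ee α)) z :=
    by have := (Complex.differentiableAt_log hz).comp z hm; exact this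
  exact ((hl.add_const _).const_mul _).cexp

lemma PP_abs_sector {α : ℝ} (hα0 : 0 < α) (hα2 : α ≤ 2) {r θ : ℝ} (hr : 0 < r) (hθ0 : 0 < θ)
    (hθπ : θ < Real.pi * α) :
    ‖PP α ((r:ℂ) * Complex.exp (θ * Complex.I))‖ = r ^ (1/α) := by
  rw [PP_spec hα0 hα2 hr hθ0 hθπ, exp_form_abs, Real.rpow_def_of_pos hr]
  congr 1
  ring

noncomputable def GG (α a : ℝ) (z : ℂ) : ℂ := (PP α z - (a:ℂ)) / (PP α z + (a:ℂ))

noncomputable def FF (α a : ℝ) (z : ℂ) : ℂ := Complex.log (GG α a z)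

noncomputable def barr (α a : ℝ) (z : ℂ) : ℝ := (1/Real.pi) * (FF α a z).im

lemma Gim_facts {w : ℂ} {a : ℝ} (hw : 0 < w.im) (ha : 0 < a) :
    w + (a:ℂ) ≠ 0 ∧
    ((w - a)/(w + a)).im = 2*a*w.im / Complex.normSq (w + a) ∧
    ((w - a)/(w + a)).re = (Complex.normSq w - a^2) / Complex.normSq (w + a) := by
  have hne : w + (a:ℂ) ≠ 0 := by
    intro h
    have h2 : (w + (a:ℂ)).im = 0 := by rw [h]; simp
    simp only [Complex.add_im, Complex.ofReal_im, add_zero] at h2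
    linarith
  have hnsq : 0 < Complex.normSq (w + a) := Complex.normSq_pos.mpr hne
  refine ⟨hne, ?_, ?_⟩
  · rw [Complex.div_im]
    simp only [Complex.sub_im, Complex.sub_re, Complex.add_im, Complex.add_re,
      Complex.ofReal_im, Complex.ofReal_re, sub_zero]
    field_simp
    ring
  · rw [Complex.div_re]
    simp only [Complex.sub_im, Complex.sub_re, Complex.add_im, Complex.add_re,
      Complex.ofReal_im, Complex.ofReal_re, sub_zero, Complex.normSq_apply]
    field_simp
    ring

lemma GG_im_pos {α a : ℝ} (ha : 0 < a) {z : ℂ} (hz : z ∈ OO α) : 0 < (GG α a z).im := by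
  obtain ⟨hne, him, -⟩ := Gim_facts hz.2 ha
  have hnsq : 0 < Complex.normSq (PP α z + a) := Complex.normSq_pos.mpr hne
  rw [GG, him]
  have := hz.2
  positivity

lemma GG_slit {α a : ℝ} (ha : 0 < a) {z : ℂ} (hz : z ∈ OO α) : GG α a z ∈ Complex.slitPlane :=
  Complex.mem_slitPlane_iff.mpr (Or.inr (GG_im_pos ha hz).ne')

lemma GG_diffAt {α a : ℝ} (ha : 0 < a) {z : ℂ} (hz : z ∈ OO α) :
    DifferentiableAt ℂ (GG α a) z := by
  have hP := PP_diffAt hz.1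
  exact (hP.sub_const _).div (hP.add_const _) (Gim_facts hz.2 ha).1

lemma FF_diffAt {α a : ℝ} (ha : 0 < a) {z : ℂ} (hz : z ∈ OO α) :
    DifferentiableAt ℂ (FF α a) z := by
  have h2 : ContinuousAt Complex.log (GG α a z) := continuousAt_clog (GG_slit ha hz)
  exact DifferentiableAt.comp (f := GG α a) z
    (Complex.differentiableAt_log (GG_slit ha hz)) (GG_diffAt ha hz)

lemma FF_diffOn {α a : ℝ} (ha : 0 < a) : DifferentiableOn ℂ (FF α a) (OO α) :=
  fun z hz => (FF_diffAt ha hz).differentiableWithinAt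

lemma barr_contDiffOn {α a : ℝ} (ha : 0 < a) : ContDiffOn ℝ 2 (barr α a) (OO α) := by
  have hF : ContDiffOn ℂ 2 (FF α a) (OO α) := (FF_diffOn ha).contDiffOn OO_open
  have hFr : ContDiffOn ℝ 2 (FF α a) (OO α) := hF.restrict_scalars ℝ
  have hout : ContDiff ℝ 2 (fun x : ℂ => (1/Real.pi) * x.im) :=
    contDiff_const.mul Complex.imCLM.contDiff
  exact hout.comp_contDiffOn hFr

lemma barr_D2 {α a : ℝ} (ha : 0 < a) {ζ : ℂ} (hζ : ζ ∈ OO α) (v : ℂ) :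
    D2 (barr α a) ζ v = (1/Real.pi) * (v * (v * deriv (deriv (FF α a)) ζ)).im := by
  have hFd : ∀ y ∈ OO α, DifferentiableAt ℂ (FF α a) y := fun y hy => FF_diffAt ha hy
  have hFan : AnalyticOnNhd ℂ (FF α a) (OO α) := (FF_diffOn ha).analyticOnNhd OO_open
  have hF' : ∀ y ∈ OO α, DifferentiableAt ℂ (deriv (FF α a)) y := fun y hy =>
    ((hFan.deriv) y hy).differentiableAt
  set T₀ : ℂ →L[ℝ] ℝ := (1/Real.pi) • Complex.imCLM with hT₀
  have hT₀app : ∀ x : ℂ, T₀ x = (1/Real.pi) * x.im := fun x => rfl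
  set Mv : ℂ →L[ℝ] ℂ := (ContinuousLinearMap.mul ℝ ℂ) v with hMv
  have hMvapp : ∀ x : ℂ, Mv x = v * x := fun x => rfl
  have claim1 : ∀ᶠ t : ℝ in 𝓝 0,
      deriv (fun s : ℝ => barr α a (ζ + s • v)) t = T₀ (v * deriv (FF α a) (ζ + t • v)) := by
    filter_upwards [eventually_line_mem OO_open hζ v] with t ht
    have hcomp : HasDerivAt (fun s : ℝ => FF α a (ζ + s • v)) (v • deriv (FF α a) (ζ + t • v)) t := by
      have := HasDerivAt.scomp (h := fun s : ℝ => ζ + s • v) (x := t)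
        ((hFd _ ht).hasDerivAt) (hasDerivAt_line ζ v t)
      simpa [Function.comp_def] using this
    have hfull : HasDerivAt (fun s : ℝ => T₀ (FF α a (ζ + s • v)))
        (T₀ (v • deriv (FF α a) (ζ + t • v))) t :=
      T₀.hasFDerivAt.comp_hasDerivAt t hcomp
    have heqf : (fun s : ℝ => barr α a (ζ + s • v)) = fun s : ℝ => T₀ (FF α a (ζ + s • v)) := by
      funext s
      rw [hT₀app, barr]
    rw [heqf, hfull.deriv, hT₀app, hT₀app]
    norm_num [smul_eq_mul]
  unfold D2
  rw [Filter.EventuallyEq.deriv_eq claim1]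
  have hcomp2 : HasDerivAt (fun t : ℝ => deriv (FF α a) (ζ + t • v))
      (v • deriv (deriv (FF α a)) ζ) 0 := by
    have := HasDerivAt.scomp_of_eq (h := fun s : ℝ => ζ + s • v) (x := 0)
      ((hF' ζ hζ).hasDerivAt) (hasDerivAt_line ζ v 0) (by simp)
    simpa [Function.comp_def] using this
  have hfull2 : HasDerivAt (fun t : ℝ => (T₀.comp Mv) (deriv (FF α a) (ζ + t • v)))
      ((T₀.comp Mv) (v • deriv (deriv (FF α a)) ζ)) 0 :=
    (T₀.comp Mv).hasFDerivAt.comp_hasDerivAt 0 hcomp2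
  have heqf2 : (fun t : ℝ => T₀ (v * deriv (FF α a) (ζ + t • v)))
      = fun t : ℝ => (T₀.comp Mv) (deriv (FF α a) (ζ + t • v)) := by
    funext t
    simp [hMvapp]
  rw [heqf2, hfull2.deriv]
  have : (T₀.comp Mv) (v • deriv (deriv (FF α a)) ζ) = T₀ (v * (v • deriv (deriv (FF α a)) ζ)) := rfl
  rw [this, hT₀app]
  norm_num [smul_eq_mul]

lemma barr_harmonic {α a : ℝ} (ha : 0 < a) {ζ : ℂ} (hζ : ζ ∈ OO α) :
    D2 (barr α a) ζ 1 + D2 (barr α a) ζ Complex.I = 0 := by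
  rw [barr_D2 ha hζ 1, barr_D2 ha hζ Complex.I]
  have h1 : (Complex.I * (Complex.I * deriv (deriv (FF α a)) ζ)) = -(deriv (deriv (FF α a)) ζ) := by
    rw [← mul_assoc, Complex.I_mul_I]
    ring
  rw [h1]
  simp

lemma arctan_le_self {x : ℝ} (hx : 0 ≤ x) : Real.arctan x ≤ x := by
  rcases le_or_gt (Real.arctan x) 0 with h | h
  · linarith
  · have h2 := Real.lt_tan h (Real.arctan_lt_pi_div_two x)
    rw [Real.tan_arctan] at h2
    exact h2.le

lemma barr_nonneg {α a : ℝ} (ha : 0 < a) {z : ℂ} (hz : z ∈ OO α) : 0 ≤ barr α a z := by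
  rw [barr, FF, Complex.log_im]
  have h1 : 0 ≤ Complex.arg (GG α a z) := Complex.arg_nonneg_iff.mpr (GG_im_pos ha hz).le
  have := Real.pi_pos
  positivity

lemma barr_le_arg {α a : ℝ} (z : ℂ) : barr α a z = (1/Real.pi) * Complex.arg (GG α a z) := by
  rw [barr, FF, Complex.log_im]

lemma barr_half {α a : ℝ} (ha : 0 < a) {z : ℂ} (hz : z ∈ OO α)
    (habs : ‖PP α z‖ < a) : 1/2 ≤ barr α a z := by
  obtain ⟨hne, him, hre⟩ := Gim_facts hz.2 ha
  have hπ := Real.pi_pos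
  have hnsq : 0 < Complex.normSq (PP α z + a) := Complex.normSq_pos.mpr hne
  have hre_neg : (GG α a z).re < 0 := by
    rw [GG, hre]
    apply div_neg_of_neg_of_pos _ hnsq
    have h1 : Complex.normSq (PP α z) = ‖PP α z‖ ^ 2 := (Complex.sq_norm _).symm
    nlinarith [norm_nonneg (PP α z)]
  have harg := Complex.arg_of_re_neg_of_im_nonneg hre_neg (GG_im_pos ha hz).le
  have h2 : Real.pi / 2 ≤ Complex.arg (GG α a z) := by
    rw [harg]
    have := Real.neg_pi_div_two_le_arcsin ((-GG α a z).im / ‖GG α a z‖)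
    linarith
  rw [barr_le_arg]
  rw [show (1:ℝ)/2 = (1/Real.pi) * (Real.pi/2) by field_simp]
  apply mul_le_mul_of_nonneg_left h2 (by positivity)

lemma barr_bound {α a : ℝ} (ha : 0 < a) {z : ℂ} (hz : z ∈ OO α)
    (habs : a < ‖PP α z‖) :
    barr α a z ≤ (1/Real.pi) * (4 * a / ‖PP α z‖) := by
  obtain ⟨hne, him, hre⟩ := Gim_facts hz.2 ha
  have hπ := Real.pi_pos
  have hπ4 := Real.pi_le_four
  set ρ := ‖PP α z‖ with hρ
  have hρ0 : 0 < ρ := lt_trans ha habs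
  have hnsq : 0 < Complex.normSq (PP α z + a) := Complex.normSq_pos.mpr hne
  have hnsqP : Complex.normSq (PP α z) = ρ ^ 2 := by rw [hρ, Complex.sq_norm]
  have hre_pos : 0 < (GG α a z).re := by
    rw [GG, hre]
    apply div_pos _ hnsq
    rw [hnsqP]
    nlinarith
  have harg_lt : Complex.arg (GG α a z) < Real.pi / 2 := by
    have := Complex.abs_arg_lt_pi_div_two_iff.mpr (Or.inl hre_pos)
    exact lt_of_le_of_lt (le_abs_self _) this
  rw [barr_le_arg]
  rcases le_or_gt ρ (8 * a / Real.pi) with hcase | hcase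
  · have h1 : Real.pi / 2 ≤ 4 * a / ρ := by
      have h2 : 4 * a / (8 * a / Real.pi) ≤ 4 * a / ρ :=
        div_le_div_of_nonneg_left (by positivity) hρ0 hcase
      have h3 : 4 * a / (8 * a / Real.pi) = Real.pi / 2 := by
        field_simp
        ring
      linarith
    have := harg_lt.le.trans h1
    exact mul_le_mul_of_nonneg_left this (by positivity)
  · have ha2 : a < ρ / 2 := by
      have : 2 * a ≤ 8 * a / Real.pi := by
        rw [le_div_iff₀ hπ]
        nlinarith
      linarith
    have hden : ρ ^ 2 / 2 ≤ ρ ^ 2 - a ^ 2 := by nlinarith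
    have hdenpos : 0 < ρ ^ 2 - a ^ 2 := by nlinarith
    have harg_eq : Complex.arg (GG α a z) =
        Real.arctan ((GG α a z).im / (GG α a z).re) := by
      have htan := Complex.tan_arg (GG α a z)
      have habs_arg : |Complex.arg (GG α a z)| < Real.pi / 2 :=
        Complex.abs_arg_lt_pi_div_two_iff.mpr (Or.inl hre_pos)
      rw [← htan, Real.arctan_tan (by linarith [abs_lt.mp habs_arg]) (by linarith [abs_lt.mp habs_arg])]
    have hratio : (GG α a z).im / (GG α a z).re
        = 2 * a * (PP α z).im / (ρ ^ 2 - a ^ 2) := by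
      rw [GG, him, hre, hnsqP]
      field_simp
    have hratio_le : (GG α a z).im / (GG α a z).re ≤ 4 * a / ρ := by
      rw [hratio]
      have hm : (PP α z).im ≤ ρ := by
        rw [hρ]
        exact le_trans (le_abs_self _) (Complex.abs_im_le_norm _)
      calc 2 * a * (PP α z).im / (ρ ^ 2 - a ^ 2)
          ≤ 2 * a * ρ / (ρ ^ 2 - a ^ 2) := by
            gcongr
      _ ≤ 2 * a * ρ / (ρ ^ 2 / 2) := by
            gcongr
      _ = 4 * a / ρ := by
            field_simp
            ring
    have h1 : Complex.arg (GG α a z) ≤ 4 * a / ρ := by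
      rw [harg_eq]
      refine le_trans (arctan_le_self ?_) hratio_le
      refine div_nonneg ?_ hre_pos.le
      rw [GG, him]
      have hmm := hz.2
      positivity
    exact mul_le_mul_of_nonneg_left h1 (by positivity)

/-- On the circular sector `S` of radius `ρ₀` and opening `πα`, any
harmonic `u ≤ 1` whose boundary limsup is `≤ 0` on `∂S ∩ {|ζ| > r₀}` satisfies
`u z ≤ (8/π)(r₀/|z|)^{1/α}` for `z ∈ S` with `|z| > r₀`. -/
theorem stmt_4 (α r₀ ρ₀ : ℝ) (hα0 : 0 < α) (hα2 : α ≤ 2) (hr₀ : 0 < r₀) (hr : r₀ < ρ₀)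
    (u : ℂ → ℝ) (hu : HarmonicOnSet u (circSector ρ₀ α))
    (hub : ∀ z ∈ circSector ρ₀ α, u z ≤ 1)
    (hbd : ∀ ζ ∈ frontier (circSector ρ₀ α), r₀ < ‖ζ‖ →
      Filter.limsup u (nhdsWithin ζ (circSector ρ₀ α)) ≤ 0) :
    ∀ z ∈ circSector ρ₀ α, r₀ < ‖z‖ →
      u z ≤ (8 / Real.pi) * (r₀ / ‖z‖) ^ (1 / α) := by
  have hπ := Real.pi_pos
  intro z₀ hz₀ hz₀r
  obtain ⟨r, θ, hrpos, hrρ, hθ0, hθπ, hzeq⟩ := id hz₀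
  have habs_z₀ : ‖z₀‖ = r := by
    rw [hzeq, norm_mul, Complex.norm_exp]
    simp [_root_.abs_of_pos hrpos]
  have hnorm_z₀ : ‖z₀‖ = r := by rw [habs_z₀]
  rw [hnorm_z₀] at hz₀r ⊢
  -- main claim for each intermediate radius r'
  suffices hH : ∀ r' : ℝ, r₀ < r' → r' < r → u z₀ ≤ (8 / Real.pi) * (r' / r) ^ (1 / α) by
    have hlim : Tendsto (fun x : ℝ => (8 / Real.pi) * (x / r) ^ (1 / α)) (𝓝[>] r₀)
        (𝓝 ((8 / Real.pi) * (r₀ / r) ^ (1 / α))) := by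
      apply Tendsto.mono_left _ nhdsWithin_le_nhds
      apply Filter.Tendsto.const_mul
      apply ContinuousAt.tendsto
      apply ContinuousAt.rpow_const (continuousAt_id.div_const r)
      left
      have : 0 < r₀ / r := div_pos hr₀ (lt_trans hr₀ hz₀r)
      exact this.ne'
    refine ge_of_tendsto hlim ?_
    filter_upwards [Ioo_mem_nhdsGT_of_mem ⟨le_refl r₀, hz₀r⟩] with x hx
    exact hH x hx.1 hx.2
  intro r' hr'0 hr'r
  have hrpos' : 0 < r' := lt_trans hr₀ hr'0
  set r'' : ℝ := (r₀ + r') / 2 with hr''def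
  have hr''0 : r₀ < r'' := by rw [hr''def]; linarith
  have hr''r' : r'' < r' := by rw [hr''def]; linarith
  have hr''pos : 0 < r'' := lt_trans hr₀ hr''0
  set a : ℝ := r' ^ (1 / α) with hadef
  have ha0 : 0 < a := Real.rpow_pos_of_pos hrpos' _
  set S : Set ℂ := circSector ρ₀ α with hSdef
  have hSopen : IsOpen S := sector_open hα0 hα2
  have hSsub : S ⊆ OO α := sector_subset_OO hα0 hα2
  set Ω : Set ℂ := S ∩ {z | r'' < ‖z‖} with hΩdef
  have hΩopen : IsOpen Ω := hSopen.inter (isOpen_lt continuous_const continuous_norm)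
  have hΩsub : Ω ⊆ S := inter_subset_left
  have habsS : ∀ z ∈ S, ‖z‖ ≤ ρ₀ := by
    rintro z ⟨r1, θ1, h1, h2, h3, h4, rfl⟩
    have : ‖(r1 : ℂ) * Complex.exp (θ1 * Complex.I)‖ = r1 := by
      rw [norm_mul, Complex.norm_exp]
      simp [_root_.abs_of_pos h1]
    rw [this]
    exact h2.le
  have huD2 : ∀ z ∈ S, D2 u z 1 + D2 u z Complex.I = 0 := by
    intro z hzS
    have h2 := hu.2 z hzS
    rw [iteratedFDeriv_two_apply, iteratedFDeriv_two_apply] at h2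
    simp only [Matrix.cons_val_zero, Matrix.cons_val_one, Matrix.head_cons] at h2
    rw [lineD2 hSopen hu.1 hzS 1, lineD2 hSopen hu.1 hzS Complex.I]
    exact h2
  have hbarrCD : ContDiffOn ℝ 2 (barr α a) S := (barr_contDiffOn ha0).mono hSsub
  set w : ℂ → ℝ := fun z => u z + (-2) * barr α a z with hwdef
  have hz₀Ω : z₀ ∈ Ω := by
    refine ⟨hz₀, ?_⟩
    simp only [mem_setOf_eq, habs_z₀]
    linarith
  have hwCD : ContDiffOn ℝ 2 w Ω :=
    ((hu.1.mono hΩsub).add (contDiffOn_const.mul (hbarrCD.mono hΩsub))).mono (fun x hx => hx)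
  have hwb : ∀ z ∈ Ω, w z ≤ 1 := by
    intro z hz
    have h1 := hub z (hΩsub hz)
    have h2 := barr_nonneg ha0 (hSsub (hΩsub hz))
    simp only [hwdef]
    nlinarith
  have hΔ : ∀ z ∈ Ω, 0 ≤ D2 w z 1 + D2 w z Complex.I := by
    intro z hz
    have e1 : D2 w z 1 = D2 u z 1 + (-2) * D2 (barr α a) z 1 :=
      D2_add_smul hSopen hu.1 hbarrCD (hΩsub hz) (-2) 1
    have e2 : D2 w z Complex.I = D2 u z Complex.I + (-2) * D2 (barr α a) z Complex.I :=
      D2_add_smul hSopen hu.1 hbarrCD (hΩsub hz) (-2) Complex.I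
    have e3 := huD2 z (hΩsub hz)
    have e4 := barr_harmonic ha0 (hSsub (hΩsub hz))
    rw [e1, e2]
    nlinarith
  have hbdΩ : ∀ ζ ∈ closure Ω, ζ ∉ Ω → ∀ ε > 0, ∀ᶠ x in 𝓝[Ω] ζ, w x ≤ ε := by
    intro ζ hζ hζΩ ε hε
    have hclS : ζ ∈ closure S := closure_mono inter_subset_left hζ
    have hcl2 : r'' ≤ ‖ζ‖ := by
      have hsub2 : Ω ⊆ {z : ℂ | r'' ≤ ‖z‖} :=
        fun x hx => show r'' ≤ ‖x‖ from le_of_lt hx.2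
      have hclosed : IsClosed {z : ℂ | r'' ≤ ‖z‖} :=
        isClosed_le continuous_const continuous_norm
      exact closure_minimal hsub2 hclosed hζ
    by_cases hζS : ζ ∈ S
    · have habs_le : ‖ζ‖ ≤ r'' := by
        by_contra hcon
        push_neg at hcon
        exact hζΩ ⟨hζS, hcon⟩
      have hPlt : ‖PP α ζ‖ < a := by
        obtain ⟨r1, θ1, hr1, hρ1, hθ1, hθπ1, hζeq⟩ := hζS
        have habs1 : ‖ζ‖ = r1 := by
          rw [hζeq, norm_mul, Complex.norm_exp]
          simp [_root_.abs_of_pos hr1]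
        rw [hζeq, PP_abs_sector hα0 hα2 hr1 hθ1 hθπ1, hadef]
        apply Real.rpow_lt_rpow hr1.le _ (by positivity)
        rw [← habs1]
        exact lt_of_le_of_lt habs_le hr''r'
      have hbar_half := barr_half ha0 (hSsub hζS) hPlt
      have hcu : ContinuousAt u ζ := hu.1.continuousOn.continuousAt (hSopen.mem_nhds hζS)
      have hcb : ContinuousAt (barr α a) ζ :=
        hbarrCD.continuousOn.continuousAt (hSopen.mem_nhds hζS)
      have e1 : ∀ᶠ x in 𝓝 ζ, u x < u ζ + ε / 2 :=
        hcu.tendsto.eventually_lt_const (by linarith)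
      have e2 : ∀ᶠ x in 𝓝 ζ, barr α a ζ - ε / 4 < barr α a x :=
        hcb.tendsto.eventually_const_lt (by linarith)
      have huζ := hub ζ hζS
      filter_upwards [e1.filter_mono nhdsWithin_le_nhds, e2.filter_mono nhdsWithin_le_nhds]
        with x hx1 hx2
      simp only [hwdef]
      nlinarith
    · have hfr : ζ ∈ frontier S := by
        rw [hSopen.frontier_eq]
        exact ⟨hclS, hζS⟩
      have hgt : r₀ < ‖ζ‖ := by
        linarith
      have hls := hbd ζ hfr hgt
      have hbdd1 : ∀ᶠ x in 𝓝[S] ζ, u x ≤ 1 :=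
        eventually_mem_nhdsWithin.mono (fun x hx => hub x hx)
      have hbdd : Filter.IsBoundedUnder (· ≤ ·) (𝓝[S] ζ) u :=
        ⟨1, eventually_map.mpr hbdd1⟩
      have hev : ∀ᶠ x in 𝓝[S] ζ, u x < ε :=
        Filter.eventually_lt_of_limsup_lt (lt_of_le_of_lt hls hε) hbdd
      have hev2 : ∀ᶠ x in 𝓝[Ω] ζ, u x < ε :=
        hev.filter_mono (nhdsWithin_mono ζ inter_subset_left)
      filter_upwards [hev2, eventually_mem_nhdsWithin] with x hx1 hx2
      have h2 := barr_nonneg ha0 (hSsub (hΩsub hx2))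
      simp only [hwdef]
      nlinarith
  have hw0 := maxPrinciple hΩopen (fun z hz => habsS z (hΩsub hz)) hwCD hwb hΔ hbdΩ z₀ hz₀Ω
  -- final computation
  have hPabs : ‖PP α z₀‖ = r ^ (1 / α) := by
    rw [hzeq]
    exact PP_abs_sector hα0 hα2 hrpos hθ0 hθπ
  have hPgt : a < ‖PP α z₀‖ := by
    rw [hPabs, hadef]
    exact Real.rpow_lt_rpow hrpos'.le hr'r (by positivity)
  have hbb := barr_bound ha0 (hSsub hz₀) hPgt
  have hkey : (1 / Real.pi) * (4 * a / ‖PP α z₀‖)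
      = (4 / Real.pi) * (r' / r) ^ (1 / α) := by
    rw [hPabs, hadef, Real.div_rpow hrpos'.le hrpos.le]
    field_simp
    try ring
  have hw0' : u z₀ ≤ 2 * barr α a z₀ := by
    simp only [hwdef] at hw0
    linarith
  calc u z₀ ≤ 2 * barr α a z₀ := hw0'
  _ ≤ 2 * ((1 / Real.pi) * (4 * a / ‖PP α z₀‖)) := by linarith
  _ = (8 / Real.pi) * (r' / r) ^ (1 / α) := by rw [hkey]; ring
end

section
/- Let 0 < α ≤ 2, set b := 1/(2α), and let a > 0. For 0 < R < a^α define G(R) := 2 ∫_0^R (1/π) [ 2 r^{2b−1} log(a^α/r) + ∑_{j=1}^∞ α r^{2b−1} (1 − (r/a^α)^{2j/α}) / (j(j+1)) ] dr. Then there exist constants C > 0 and R̄ ∈ (0, min(a^α, 1)) such that |G(R) − (2/(πb)) R^{2b} log(1/R)| ≤ C R^{2b} for all R ∈ (0, R̄). In particular, for every ε > 0 there exists R̄' > 0 such that G(R) ≥ (1 − ε)(2/(πb)) R^{2b} log(1/R) for all R ∈ (0, R̄'). -/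
open Set MeasureTheory intervalIntegral

private lemma w_partial (n : ℕ) :
    ∑ j ∈ Finset.range n, 1 / (((j:ℝ) + 1) * ((j:ℝ) + 2)) ≤ 1 := by
  have h : ∀ j : ℕ, 1 / (((j:ℝ) + 1) * ((j:ℝ) + 2))
      = (fun k : ℕ => 1 / ((k:ℝ) + 1)) j - (fun k : ℕ => 1 / ((k:ℝ) + 1)) (j + 1) := by
    intro j
    have h1 : ((j:ℝ) + 1) ≠ 0 := by positivity
    have h2 : ((j:ℝ) + 2) ≠ 0 := by positivity
    push_cast
    rw [show (j:ℝ)+1+1 = (j:ℝ)+2 by ring, div_sub_div _ _ h1 h2]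
    rw [div_eq_div_iff (by positivity) (by positivity)]
    ring
  rw [Finset.sum_congr rfl fun j _ => h j, Finset.sum_range_sub']
  have : (0:ℝ) ≤ 1 / ((n:ℝ) + 1) := by positivity
  norm_num
  linarith

private lemma w_summable : Summable (fun j : ℕ => 1 / (((j:ℝ) + 1) * ((j:ℝ) + 2))) :=
  summable_of_sum_range_le (fun n => by positivity) w_partial

private lemma w_tsum_le : ∑' j : ℕ, 1 / (((j:ℝ) + 1) * ((j:ℝ) + 2)) ≤ 1 :=
  Real.tsum_le_of_sum_range_le (fun n => by positivity) w_partial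

set_option maxHeartbeats 3200000 in
/-- for `0 < α ≤ 2`, `b := 1/(2α)` and `a > 0`, the explicit balayage
mass `G(R)` of the sector at the critical exponent satisfies
`|G(R) − (2/(πb)) R^{2b} log(1/R)| ≤ C R^{2b}` for small `R`; in particular for every
`ε > 0`, `G(R) ≥ (1−ε)(2/(πb)) R^{2b} log(1/R)` for all small `R`. The sum
`∑_{j≥1} α r^{2b−1}(1−(r/a^α)^{2j/α})/(j(j+1))` is indexed by `j+1`, `j : ℕ`. -/
theorem stmt_11 (α a b : ℝ) (hα0 : 0 < α) (hα2 : α ≤ 2) (ha : 0 < a)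
    (hb : b = 1 / (2 * α)) (G : ℝ → ℝ)
    (hG : ∀ R : ℝ, G R = 2 * ∫ r in (0:ℝ)..R, (1 / Real.pi) *
      (2 * r ^ (2 * b - 1) * Real.log (a ^ α / r) +
        ∑' j : ℕ, α * r ^ (2 * b - 1) * (1 - (r / a ^ α) ^ (2 * ((j:ℝ) + 1) / α)) /
          (((j:ℝ) + 1) * ((j:ℝ) + 2)))) :
    (∃ C > (0:ℝ), ∃ Rb ∈ Ioo (0:ℝ) (min (a ^ α) 1), ∀ R ∈ Ioo (0:ℝ) Rb,
      |G R - 2 / (Real.pi * b) * R ^ (2 * b) * Real.log (1 / R)| ≤ C * R ^ (2 * b)) ∧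
    (∀ ε > (0:ℝ), ∃ Rb' > (0:ℝ), ∀ R ∈ Ioo (0:ℝ) Rb',
      G R ≥ (1 - ε) * (2 / (Real.pi * b)) * R ^ (2 * b) * Real.log (1 / R)) := by
  have hπ : (0:ℝ) < Real.pi := Real.pi_pos
  set A := a ^ α with hAdef
  have hA : 0 < A := Real.rpow_pos_of_pos ha α
  have hb0 : 0 < b := by rw [hb]; positivity
  have h2b : 0 < 2 * b := by linarith
  have hp : (-1:ℝ) < 2 * b - 1 := by linarith
  have hbm1 : (-1:ℝ) < b - 1 := by linarith
  set T : ℝ → ℝ := fun r => ∑' j : ℕ,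
    (1 - (r / A) ^ (2 * ((j:ℝ) + 1) / α)) / (((j:ℝ) + 1) * ((j:ℝ) + 2)) with hTdef
  set ρ := min A 1 with hρdef
  have hρ0 : 0 < ρ := lt_min hA one_pos
  set K : ℝ := (2 * |Real.log A| + α) / (2 * b) + 2 / ((2 * b) * (2 * b)) with hKdef
  have hK0 : 0 ≤ K := by
    rw [hKdef]
    have h1 : 0 ≤ |Real.log A| := abs_nonneg _
    exact add_nonneg (div_nonneg (by linarith) h2b.le)
      (div_nonneg (by norm_num) (mul_nonneg h2b.le h2b.le))
  set C : ℝ := 2 / Real.pi * K + 1 with hCdef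
  clear_value A T ρ K C
  have hC0 : 0 < C := by
    rw [hCdef]
    have h : 0 ≤ 2 / Real.pi * K := mul_nonneg (by positivity) hK0
    linarith
  have key : ∀ R ∈ Ioo (0:ℝ) (ρ / 2),
      |G R - 2 / (Real.pi * b) * R ^ (2 * b) * Real.log (1 / R)| ≤ C * R ^ (2 * b) := by
    intro R hR
    have hR0 : 0 < R := hR.1
    have hle : (0:ℝ) ≤ R := hR0.le
    have hRρ : R < ρ := lt_of_lt_of_le hR.2 (by linarith)
    have hRρ' : R < min A 1 := by rw [← hρdef]; exact hRρ
    have hRA : R < A := hRρ'.trans_le (min_le_left _ _)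
    have hR1 : R < 1 := hRρ'.trans_le (min_le_right _ _)
    have hRp : 0 < R ^ (2 * b) := Real.rpow_pos_of_pos hR0 _
    -- bounds on T
    have hTfacts : ∀ r ∈ Icc (0:ℝ) R, 0 ≤ T r ∧ T r ≤ 1 := by
      intro r hr
      rw [hTdef]
      have hx0 : 0 ≤ r / A := div_nonneg hr.1 hA.le
      have hx1 : r / A ≤ 1 := by
        rw [div_le_one hA]; exact hr.2.trans hRA.le
      have hterm : ∀ j : ℕ,
          0 ≤ (1 - (r / A) ^ (2 * ((j:ℝ) + 1) / α)) / (((j:ℝ) + 1) * ((j:ℝ) + 2)) ∧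
          (1 - (r / A) ^ (2 * ((j:ℝ) + 1) / α)) / (((j:ℝ) + 1) * ((j:ℝ) + 2))
            ≤ 1 / (((j:ℝ) + 1) * ((j:ℝ) + 2)) := by
        intro j
        have he : 0 ≤ 2 * ((j:ℝ) + 1) / α := by positivity
        have h1 : (r / A) ^ (2 * ((j:ℝ) + 1) / α) ≤ 1 := Real.rpow_le_one hx0 hx1 he
        have h2 : 0 ≤ (r / A) ^ (2 * ((j:ℝ) + 1) / α) := Real.rpow_nonneg hx0 _
        have hc : 0 < ((j:ℝ) + 1) * ((j:ℝ) + 2) := by positivity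
        refine ⟨div_nonneg (by linarith) hc.le, ?_⟩
        exact (div_le_div_iff_of_pos_right hc).mpr (by linarith)
      have hsum : Summable (fun j : ℕ =>
          (1 - (r / A) ^ (2 * ((j:ℝ) + 1) / α)) / (((j:ℝ) + 1) * ((j:ℝ) + 2))) :=
        Summable.of_nonneg_of_le (fun j => (hterm j).1) (fun j => (hterm j).2) w_summable
      exact ⟨tsum_nonneg fun j => (hterm j).1,
        le_trans (Summable.tsum_le_tsum (fun j => (hterm j).2) hsum w_summable) w_tsum_le⟩
    -- rewrite of the series
    have hSeq : ∀ r : ℝ,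
        (∑' j : ℕ, α * r ^ (2 * b - 1) * (1 - (r / A) ^ (2 * ((j:ℝ) + 1) / α)) /
          (((j:ℝ) + 1) * ((j:ℝ) + 2))) = α * r ^ (2 * b - 1) * T r := by
      intro r
      rw [hTdef, ← tsum_mul_left]
      exact tsum_congr fun j => by rw [mul_div_assoc]
    -- integrability facts
    have hint_pow : IntervalIntegrable (fun r : ℝ => r ^ (2 * b - 1)) volume 0 R :=
      intervalIntegrable_rpow' hp
    have hlog_le : ∀ r : ℝ, 0 < r → Real.log (1 / r) ≤ (1 / b) * r ^ (-b) := by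
      intro r hr
      have h1 : Real.log (r ^ (-b)) ≤ r ^ (-b) - 1 :=
        Real.log_le_sub_one_of_pos (Real.rpow_pos_of_pos hr _)
      rw [Real.log_rpow hr] at h1
      have h2 : 0 < r ^ (-b) := Real.rpow_pos_of_pos hr _
      rw [one_div, Real.log_inv]
      calc -Real.log r = (1 / b) * (-b * Real.log r) := by
            field_simp
        _ ≤ (1 / b) * r ^ (-b) :=
          mul_le_mul_of_nonneg_left (by linarith) (one_div_pos.mpr hb0).le
    have hlognn : ∀ r : ℝ, 0 < r → r ≤ 1 → 0 ≤ Real.log (1 / r) := by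
      intro r hr hr1
      rw [one_div, Real.log_inv]
      have := Real.log_nonpos hr.le hr1
      linarith
    have hint_log : IntervalIntegrable
        (fun r : ℝ => r ^ (2 * b - 1) * Real.log (1 / r)) volume 0 R := by
      rw [intervalIntegrable_iff_integrableOn_Ioc_of_le hle]
      have hmeas : ContinuousOn (fun r : ℝ => r ^ (2 * b - 1) * Real.log (1 / r)) (Ioc 0 R) := by
        apply ContinuousOn.mul
        · exact continuousOn_id.rpow_const fun x hx => Or.inl (ne_of_gt hx.1)
        · intro x hx
          have h1 : ContinuousAt (fun r : ℝ => Real.log (1 / r)) x := by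
            simp only [one_div]
            exact (Real.continuousAt_log (inv_ne_zero (ne_of_gt hx.1))).comp
              (continuousAt_inv₀ (ne_of_gt hx.1))
          exact h1.continuousWithinAt
      have hg : IntegrableOn (fun r : ℝ => (1 / b) * r ^ (b - 1)) (Ioc 0 R) volume := by
        have h := (intervalIntegrable_rpow' (a := (0:ℝ)) (b := R) hbm1).const_mul (1 / b)
        rwa [intervalIntegrable_iff_integrableOn_Ioc_of_le hle] at h
      refine Integrable.mono hg (hmeas.aestronglyMeasurable measurableSet_Ioc) ?_
      rw [ae_restrict_iff' measurableSet_Ioc]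
      refine ae_of_all _ fun r hr => ?_
      have hr0 : 0 < r := hr.1
      have hr1 : r ≤ 1 := hr.2.trans hR1.le
      have hln : 0 ≤ Real.log (1 / r) := hlognn r hr0 hr1
      have hrp : 0 ≤ r ^ (2 * b - 1) := (Real.rpow_pos_of_pos hr0 _).le
      have hmul : r ^ (2 * b - 1) * Real.log (1 / r)
          ≤ r ^ (2 * b - 1) * ((1 / b) * r ^ (-b)) :=
        mul_le_mul_of_nonneg_left (hlog_le r hr0) hrp
      have hrw : r ^ (2 * b - 1) * r ^ (-b) = r ^ (b - 1) := by
        rw [← Real.rpow_add hr0]; congr 1; ring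
      rw [Real.norm_eq_abs, Real.norm_eq_abs,
        abs_of_nonneg (mul_nonneg hrp hln), abs_of_pos (mul_pos (one_div_pos.mpr hb0) (Real.rpow_pos_of_pos hr0 _))]
      calc r ^ (2 * b - 1) * Real.log (1 / r)
          ≤ r ^ (2 * b - 1) * ((1 / b) * r ^ (-b)) := hmul
        _ = (1 / b) * r ^ (b - 1) := by rw [← hrw]; ring
    -- continuity and integrability of the series part
    have hTcont : ContinuousOn T (Icc 0 R) := by
      rw [hTdef]
      apply continuousOn_tsum (u := fun j : ℕ => 1 / (((j:ℝ) + 1) * ((j:ℝ) + 2)))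
        ?_ w_summable ?_
      · intro j
        exact (continuousOn_const.sub ((continuousOn_id.div_const A).rpow_const
          fun x _ => Or.inr (by positivity))).div_const _
      · intro j x hx
        have hx0 : 0 ≤ x / A := div_nonneg hx.1 hA.le
        have hx1 : x / A ≤ 1 := by rw [div_le_one hA]; exact hx.2.trans hRA.le
        have h1 : (x / A) ^ (2 * ((j:ℝ) + 1) / α) ≤ 1 :=
          Real.rpow_le_one hx0 hx1 (by positivity)
        have h2 : 0 ≤ (x / A) ^ (2 * ((j:ℝ) + 1) / α) := Real.rpow_nonneg hx0 _
        have hc : 0 < ((j:ℝ) + 1) * ((j:ℝ) + 2) := by positivity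
        rw [Real.norm_eq_abs, abs_div, abs_of_pos hc, abs_of_nonneg (by linarith)]
        exact (div_le_div_iff_of_pos_right hc).mpr (by linarith)
    have hScont : ContinuousOn (fun r : ℝ => α * r ^ (2 * b - 1) * T r) (Ioc 0 R) :=
      ((continuousOn_const.mul (continuousOn_id.rpow_const
        fun x hx => Or.inl (ne_of_gt hx.1))).mul (hTcont.mono Ioc_subset_Icc_self))
    have hint_S : IntervalIntegrable (fun r : ℝ => α * r ^ (2 * b - 1) * T r) volume 0 R := by
      rw [intervalIntegrable_iff_integrableOn_Ioc_of_le hle]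
      have hg : IntegrableOn (fun r : ℝ => α * r ^ (2 * b - 1)) (Ioc 0 R) volume := by
        have h := hint_pow.const_mul α
        rwa [intervalIntegrable_iff_integrableOn_Ioc_of_le hle] at h
      refine Integrable.mono hg (hScont.aestronglyMeasurable measurableSet_Ioc) ?_
      rw [ae_restrict_iff' measurableSet_Ioc]
      refine ae_of_all _ fun r hr => ?_
      obtain ⟨hT0, hT1⟩ := hTfacts r (Ioc_subset_Icc_self hr)
      have hrp : 0 ≤ r ^ (2 * b - 1) := (Real.rpow_pos_of_pos hr.1 _).le
      have h1 : 0 ≤ α * r ^ (2 * b - 1) := mul_nonneg hα0.le hrp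
      rw [Real.norm_eq_abs, Real.norm_eq_abs, abs_of_nonneg (mul_nonneg h1 hT0),
        abs_of_nonneg h1]
      nlinarith
    -- value of ∫ r^p
    have hI0 : (∫ r in (0:ℝ)..R, r ^ (2 * b - 1)) = R ^ (2 * b) / (2 * b) := by
      rw [integral_rpow (Or.inl hp), show 2 * b - 1 + 1 = 2 * b by ring,
        Real.zero_rpow (ne_of_gt h2b), sub_zero]
    -- FTC for ∫ r^p log(1/r)
    have hFcont : ContinuousOn (fun r : ℝ =>
        r ^ (2 * b) * Real.log (1 / r) / (2 * b) + r ^ (2 * b) / ((2 * b) * (2 * b)))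
        (Icc 0 R) := by
      apply ContinuousOn.add
      · apply ContinuousOn.div_const
        intro x hx
        rcases eq_or_lt_of_le hx.1 with h0 | h0
        · have heq : (fun r : ℝ => r ^ (2 * b) * Real.log (1 / r))
              = fun r => -(Real.log r * r ^ (2 * b)) := by
            funext r; rw [one_div, Real.log_inv]; ring
          have hmain : Filter.Tendsto (fun r : ℝ => -(Real.log r * r ^ (2 * b)))
              (nhdsWithin 0 (Ioi 0)) (nhds 0) := by
            simpa using (tendsto_log_mul_rpow_nhdsGT_zero h2b).neg
          have hsub : nhdsWithin (0:ℝ) (Icc 0 R) ≤ nhdsWithin 0 (insert 0 (Ioi 0)) := by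
            apply nhdsWithin_mono
            intro x hx
            rcases eq_or_lt_of_le hx.1 with h | h
            · exact Or.inl h.symm
            · exact Or.inr h
          have htend : Filter.Tendsto (fun r : ℝ => r ^ (2 * b) * Real.log (1 / r))
              (nhdsWithin (0:ℝ) (Icc 0 R)) (nhds 0) := by
            rw [heq]
            apply Filter.Tendsto.mono_left _ hsub
            rw [nhdsWithin_insert, Filter.tendsto_sup]
            refine ⟨?_, hmain⟩
            rw [Filter.tendsto_pure_left]
            intro s hs
            have hz : -(Real.log (0:ℝ) * (0:ℝ) ^ (2 * b)) = 0 := by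
              simp [Real.zero_rpow (ne_of_gt h2b)]
            rw [hz]
            exact mem_of_mem_nhds hs
          rw [← h0]
          unfold ContinuousWithinAt
          convert htend using 2
          simp [Real.zero_rpow (ne_of_gt h2b)]
        · apply ContinuousAt.continuousWithinAt
          have h1 : ContinuousAt (fun r : ℝ => r ^ (2 * b)) x :=
            Real.continuousAt_rpow_const x _ (Or.inl (ne_of_gt h0))
          have h2 : ContinuousAt (fun r : ℝ => Real.log (1 / r)) x := by
            simp only [one_div]
            exact (Real.continuousAt_log (inv_ne_zero (ne_of_gt h0))).comp
              (continuousAt_inv₀ (ne_of_gt h0))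
          exact h1.mul h2
      · exact (continuousOn_id.rpow_const fun x _ => Or.inr h2b.le).div_const _
    have hFderiv : ∀ x ∈ Ioo (0:ℝ) R, HasDerivAt (fun r : ℝ =>
        r ^ (2 * b) * Real.log (1 / r) / (2 * b) + r ^ (2 * b) / ((2 * b) * (2 * b)))
        (x ^ (2 * b - 1) * Real.log (1 / x)) x := by
      intro x hx
      have hx0 : 0 < x := hx.1
      have h1 : HasDerivAt (fun r : ℝ => r ^ (2 * b)) (2 * b * x ^ (2 * b - 1)) x :=
        Real.hasDerivAt_rpow_const (Or.inl (ne_of_gt hx0))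
      have h2 : HasDerivAt (fun r : ℝ => Real.log (1 / r)) (-x⁻¹) x := by
        have heq : (fun r : ℝ => Real.log (1 / r)) = fun r => -Real.log r := by
          funext r; rw [one_div, Real.log_inv]
        rw [heq]
        exact (Real.hasDerivAt_log (ne_of_gt hx0)).neg
      have h3 := ((h1.mul h2).div_const (2 * b)).add (h1.div_const ((2 * b) * (2 * b)))
      refine h3.congr_deriv ?_
      have hxx : x ^ (2 * b) = x ^ (2 * b - 1) * x := by
        rw [← Real.rpow_add_one (ne_of_gt hx0)]; congr 1; ring
      rw [hxx]
      have hx' : x ≠ 0 := ne_of_gt hx0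
      field_simp
      ring
    have hI1 : (∫ r in (0:ℝ)..R, r ^ (2 * b - 1) * Real.log (1 / r))
        = R ^ (2 * b) * Real.log (1 / R) / (2 * b) + R ^ (2 * b) / ((2 * b) * (2 * b)) := by
      rw [integral_eq_sub_of_hasDerivAt_of_le hle hFcont hFderiv hint_log]
      simp [Real.zero_rpow (ne_of_gt h2b)]
    -- bounds on IS
    have hIS0 : 0 ≤ ∫ r in (0:ℝ)..R, α * r ^ (2 * b - 1) * T r := by
      apply intervalIntegral.integral_nonneg hle
      intro r hr
      obtain ⟨hT0, _⟩ := hTfacts r hr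
      have hrp : 0 ≤ r ^ (2 * b - 1) := Real.rpow_nonneg hr.1 _
      exact mul_nonneg (mul_nonneg hα0.le hrp) hT0
    have hISle : (∫ r in (0:ℝ)..R, α * r ^ (2 * b - 1) * T r)
        ≤ α * (R ^ (2 * b) / (2 * b)) := by
      have h1 : (∫ r in (0:ℝ)..R, α * r ^ (2 * b - 1) * T r)
          ≤ ∫ r in (0:ℝ)..R, α * r ^ (2 * b - 1) := by
        apply intervalIntegral.integral_mono_on hle hint_S (hint_pow.const_mul α)
        intro r hr
        obtain ⟨hT0, hT1⟩ := hTfacts r hr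
        have hrp : 0 ≤ r ^ (2 * b - 1) := Real.rpow_nonneg hr.1 _
        nlinarith [mul_le_mul_of_nonneg_left hT1 (mul_nonneg hα0.le hrp)]
      rwa [intervalIntegral.integral_const_mul, hI0] at h1
    -- splitting the integral
    have hcongr : (∫ r in (0:ℝ)..R, (1 / Real.pi) *
        (2 * r ^ (2 * b - 1) * Real.log (A / r) +
          ∑' j : ℕ, α * r ^ (2 * b - 1) * (1 - (r / A) ^ (2 * ((j:ℝ) + 1) / α)) /
            (((j:ℝ) + 1) * ((j:ℝ) + 2))))
        = ∫ r in (0:ℝ)..R, ((2 * Real.log A / Real.pi) * r ^ (2 * b - 1)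
            + (2 / Real.pi) * (r ^ (2 * b - 1) * Real.log (1 / r))
            + (1 / Real.pi) * (α * r ^ (2 * b - 1) * T r)) := by
      apply intervalIntegral.integral_congr_ae
      refine ae_of_all _ fun r hr => ?_
      rw [uIoc_of_le hle] at hr
      have hr0 : 0 < r := hr.1
      have hlogd : Real.log (A / r) = Real.log A + Real.log (1 / r) := by
        rw [Real.log_div (ne_of_gt hA) (ne_of_gt hr0), one_div, Real.log_inv]
        ring
      rw [hSeq r, hlogd]
      ring
    have hsplit : (∫ r in (0:ℝ)..R, ((2 * Real.log A / Real.pi) * r ^ (2 * b - 1)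
            + (2 / Real.pi) * (r ^ (2 * b - 1) * Real.log (1 / r))
            + (1 / Real.pi) * (α * r ^ (2 * b - 1) * T r)))
        = (2 * Real.log A / Real.pi) * (R ^ (2 * b) / (2 * b))
          + (2 / Real.pi) * (R ^ (2 * b) * Real.log (1 / R) / (2 * b)
              + R ^ (2 * b) / ((2 * b) * (2 * b)))
          + (1 / Real.pi) * ∫ r in (0:ℝ)..R, α * r ^ (2 * b - 1) * T r := by
      rw [intervalIntegral.integral_add (((hint_pow.const_mul _)).add
          (hint_log.const_mul _)) (hint_S.const_mul _),
        intervalIntegral.integral_add (hint_pow.const_mul _) (hint_log.const_mul _),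
        intervalIntegral.integral_const_mul, intervalIntegral.integral_const_mul,
        intervalIntegral.integral_const_mul, hI0, hI1]
    have hGR : G R = 2 * ((2 * Real.log A / Real.pi) * (R ^ (2 * b) / (2 * b))
          + (2 / Real.pi) * (R ^ (2 * b) * Real.log (1 / R) / (2 * b)
              + R ^ (2 * b) / ((2 * b) * (2 * b)))
          + (1 / Real.pi) * ∫ r in (0:ℝ)..R, α * r ^ (2 * b - 1) * T r) := by
      rw [hG R, hcongr, hsplit]
    -- assemble
    obtain ⟨IS, hISdef⟩ : ∃ x : ℝ, x = ∫ r in (0:ℝ)..R, α * r ^ (2 * b - 1) * T r := ⟨_, rfl⟩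
    rw [← hISdef] at hIS0 hISle hGR
    have hdiff : G R - 2 / (Real.pi * b) * R ^ (2 * b) * Real.log (1 / R)
        = 2 / Real.pi * (2 * Real.log A * (R ^ (2 * b) / (2 * b))
            + 2 * (R ^ (2 * b) / ((2 * b) * (2 * b))) + IS) := by
      rw [hGR]
      field_simp [hπ.ne', hb0.ne']
      ring
    rw [hdiff]
    have hinner : |2 * Real.log A * (R ^ (2 * b) / (2 * b))
        + 2 * (R ^ (2 * b) / ((2 * b) * (2 * b))) + IS| ≤ K * R ^ (2 * b) := by
      have hu : 0 < R ^ (2 * b) / (2 * b) := div_pos hRp h2b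
      have e1 : 2 * Real.log A * (R ^ (2 * b) / (2 * b))
          ≤ 2 * |Real.log A| * (R ^ (2 * b) / (2 * b)) :=
        mul_le_mul_of_nonneg_right (by
          have := le_abs_self (Real.log A); linarith) hu.le
      have e1' : -(2 * |Real.log A| * (R ^ (2 * b) / (2 * b)))
          ≤ 2 * Real.log A * (R ^ (2 * b) / (2 * b)) := by
        have h := mul_le_mul_of_nonneg_right (show -(2 * |Real.log A|) ≤ 2 * Real.log A from by
          have := neg_abs_le (Real.log A); linarith) hu.le
        linarith [h]
      have e2 : IS ≤ α * (R ^ (2 * b) / (2 * b)) := hISle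
      have e3 : 0 ≤ IS := hIS0
      have hKu : K * R ^ (2 * b) = 2 * |Real.log A| * (R ^ (2 * b) / (2 * b))
          + α * (R ^ (2 * b) / (2 * b)) + 2 * (R ^ (2 * b) / ((2 * b) * (2 * b))) := by
        rw [hKdef]
        field_simp [hb0.ne']
      rw [abs_le, hKu]
      have h4 : 0 ≤ 2 * (R ^ (2 * b) / ((2 * b) * (2 * b))) :=
        mul_nonneg (by norm_num) (div_nonneg hRp.le (mul_nonneg h2b.le h2b.le))
      have h5 : 0 ≤ α * (R ^ (2 * b) / (2 * b)) := mul_nonneg hα0.le hu.le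
      constructor
      · linarith
      · linarith
    calc |2 / Real.pi * (2 * Real.log A * (R ^ (2 * b) / (2 * b))
            + 2 * (R ^ (2 * b) / ((2 * b) * (2 * b))) + IS)|
        = 2 / Real.pi * |2 * Real.log A * (R ^ (2 * b) / (2 * b))
            + 2 * (R ^ (2 * b) / ((2 * b) * (2 * b))) + IS| := by
          rw [abs_mul, abs_of_pos (by positivity : (0:ℝ) < 2 / Real.pi)]
      _ ≤ 2 / Real.pi * (K * R ^ (2 * b)) :=
          mul_le_mul_of_nonneg_left hinner (by positivity)
      _ ≤ C * R ^ (2 * b) := by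
          rw [hCdef]
          nlinarith [hRp]
  constructor
  · exact ⟨C, hC0, ρ / 2, ⟨half_pos hρ0, half_lt_self hρ0⟩, key⟩
  · intro ε hε
    set M : ℝ := C * Real.pi * b / (2 * ε) with hMdef
    have hM0 : 0 < M := by
      rw [hMdef]
      exact div_pos (mul_pos (mul_pos hC0 hπ) hb0) (by linarith)
    refine ⟨min (ρ / 2) (Real.exp (-M)), lt_min (half_pos hρ0) (Real.exp_pos _), ?_⟩
    intro R hR
    have hR0 : 0 < R := hR.1
    have hRρ2 : R < ρ / 2 := lt_of_lt_of_le hR.2 (min_le_left _ _)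
    have hRe : R < Real.exp (-M) := lt_of_lt_of_le hR.2 (min_le_right _ _)
    have hRp : 0 < R ^ (2 * b) := Real.rpow_pos_of_pos hR0 _
    have hlogR : M < Real.log (1 / R) := by
      rw [one_div, Real.log_inv]
      have := Real.log_lt_log hR0 hRe
      rw [Real.log_exp] at this
      linarith
    have hkey := key R ⟨hR0, hRρ2⟩
    rw [abs_le] at hkey
    have h1 : G R ≥ 2 / (Real.pi * b) * R ^ (2 * b) * Real.log (1 / R) - C * R ^ (2 * b) := by
      linarith [hkey.1]
    have h2 : C * R ^ (2 * b) ≤ ε * (2 / (Real.pi * b)) * R ^ (2 * b) * Real.log (1 / R) := by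
      have hC' : C ≤ ε * (2 / (Real.pi * b)) * Real.log (1 / R) := by
        have hMC : ε * (2 / (Real.pi * b)) * M = C := by
          rw [hMdef]; field_simp
        have ht : 0 ≤ ε * (2 / (Real.pi * b)) :=
          (mul_pos hε (div_pos two_pos (mul_pos hπ hb0))).le
        nlinarith [mul_le_mul_of_nonneg_left hlogR.le ht]
      nlinarith [mul_le_mul_of_nonneg_right hC' hRp.le]
    have : (1 - ε) * (2 / (Real.pi * b)) * R ^ (2 * b) * Real.log (1 / R)
        = 2 / (Real.pi * b) * R ^ (2 * b) * Real.log (1 / R)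
          - ε * (2 / (Real.pi * b)) * R ^ (2 * b) * Real.log (1 / R) := by ring
    rw [ge_iff_le, this]
    linarith
end

section
/- Let 0 < α ≤ 2, b > 0 with 2b > 1/α and 2b ∉ {(2j+1)/α : j = 0, 1, 2, ...}, and let a > 0. For 0 < R < a^α define F(R) := 2 ∫_0^R (4 a^{2αb}/(απ r)) ∑_{j=0}^∞ [ (r/a^α)^{2b} − (r/a^α)^{(2j+1)/α} ] / ( ((2j+1)/α)² − (2b)² ) dr. Then there exist constants c > 0, C > 0 and R̄ ∈ (0, a^α) such that c R^{1/α} ≤ F(R) ≤ C R^{1/α} for all R ∈ (0, R̄). -/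
open Set

lemma aux_sum (α b : ℝ) (hα0 : 0 < α) (hb : 0 < b) (h2b : 2 * b > 1 / α)
    (hbj : ∀ j : ℕ, 2 * b ≠ (2 * (j:ℝ) + 1) / α) :
    ∃ cL > (0:ℝ), ∃ cU > (0:ℝ), ∃ t₀ ∈ Ioo (0:ℝ) 1, ∀ t ∈ Ioo (0:ℝ) t₀,
      Summable (fun j : ℕ => (t ^ (2*b) - t ^ ((2*(j:ℝ)+1)/α)) / (((2*(j:ℝ)+1)/α)^2 - (2*b)^2)) ∧
      cL * t ^ (1/α) ≤ (∑' j : ℕ, (t ^ (2*b) - t ^ ((2*(j:ℝ)+1)/α)) / (((2*(j:ℝ)+1)/α)^2 - (2*b)^2)) ∧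
      (∑' j : ℕ, (t ^ (2*b) - t ^ ((2*(j:ℝ)+1)/α)) / (((2*(j:ℝ)+1)/α)^2 - (2*b)^2)) ≤ cU * t ^ (1/α) := by
  have hα0' : (0:ℝ) < 1/α := by positivity
  have hb2 : (0:ℝ) < 2*b := by linarith
  have hspos : ∀ j : ℕ, 0 < (2*(j:ℝ)+1)/α := fun j => by positivity
  have hs1α : ∀ j : ℕ, 1/α ≤ (2*(j:ℝ)+1)/α := by
    intro j
    gcongr
    linarith [Nat.cast_nonneg (α := ℝ) j]
  have hdne : ∀ j : ℕ, ((2*(j:ℝ)+1)/α)^2 - (2*b)^2 ≠ 0 := by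
    intro j h
    exact hbj j ((sq_eq_sq₀ (hspos j).le hb2.le).1 (by linarith [sub_eq_zero.1 h])).symm
  have hdabs : ∀ j : ℕ, 0 < |((2*(j:ℝ)+1)/α)^2 - (2*b)^2| := fun j => abs_pos.2 (hdne j)
  -- summability of the majorant
  have hU : Summable (fun j : ℕ => 1/|((2*(j:ℝ)+1)/α)^2 - (2*b)^2|) := by
    set N := ⌈2*α*b⌉₊ with hN
    apply (summable_nat_add_iff N).1
    have hcomp : Summable (fun n : ℕ => 2*α^2/((n:ℝ)+1)^2) := by
      have h1 : Summable (fun n : ℕ => 1/((n:ℝ)+1)^2) := by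
        have := (summable_nat_add_iff 1).2 (Real.summable_one_div_nat_pow.2 one_lt_two)
        simpa [Nat.cast_add] using this
      exact (h1.mul_left (2*α^2)).congr (fun n => by ring)
    apply Summable.of_nonneg_of_le (fun n => by positivity) ?_ hcomp
    intro n
    have hNle : 2*α*b ≤ (N:ℝ) := Nat.le_ceil _
    set S : ℝ := (2*((n:ℝ)+(N:ℝ))+1)/α with hS
    have hcast : ((n + N : ℕ):ℝ) = (n:ℝ) + (N:ℝ) := by push_cast; ring
    have hSeq : (2*(((n+N:ℕ)):ℝ)+1)/α = S := by rw [hcast]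
    rw [hSeq]
    have hS4b : 4*b ≤ S := by
      rw [hS, le_div_iff₀ hα0]
      have : (0:ℝ) ≤ (n:ℝ) := Nat.cast_nonneg n
      nlinarith
    have hSpos : 0 < S := by positivity
    have hdlb : S^2/2 ≤ S^2 - (2*b)^2 := by nlinarith
    have hdpos : 0 < S^2 - (2*b)^2 := lt_of_lt_of_le (by positivity) hdlb
    rw [abs_of_pos hdpos]
    have h1 : 1/(S^2 - (2*b)^2) ≤ 1/(S^2/2) := by
      apply one_div_le_one_div_of_le (by positivity) hdlb
    apply h1.trans
    have hSval : S^2 = (2*((n:ℝ)+(N:ℝ))+1)^2/α^2 := by rw [hS, div_pow]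
    rw [hSval]
    have hM : (0:ℝ) < (n:ℝ)+1 := by positivity
    have hMle : ((n:ℝ)+1)^2 ≤ (2*((n:ℝ)+(N:ℝ))+1)^2 := by
      have : (0:ℝ) ≤ (n:ℝ) := Nat.cast_nonneg n
      have : (0:ℝ) ≤ (N:ℝ) := Nat.cast_nonneg N
      nlinarith
    have heq : 1/((2*((n:ℝ)+(N:ℝ))+1)^2/α^2/2) = 2*α^2/(2*((n:ℝ)+(N:ℝ))+1)^2 := by
      field_simp
    rw [heq]
    gcongr
  -- constants
  set U : ℝ := ∑' j : ℕ, 1/|((2*(j:ℝ)+1)/α)^2 - (2*b)^2| with hUdef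
  have hU0 : 0 ≤ U := tsum_nonneg (fun j => by positivity)
  set e : ℝ := 2*b - 1/α with he
  have he0 : 0 < e := by rw [he]; linarith
  set D : ℝ := (2*b)^2 - (1/α)^2 with hD
  have hD0 : 0 < D := by rw [hD]; nlinarith
  refine ⟨1/(2*D), by positivity, U + 1, by positivity,
    (1/2 : ℝ) ^ (1/e), ⟨Real.rpow_pos_of_pos (by norm_num) _,
      Real.rpow_lt_one (by norm_num) (by norm_num) (by positivity)⟩, ?_⟩
  rintro t ⟨ht0, htlt⟩
  have ht1 : t < 1 := htlt.trans (Real.rpow_lt_one (by norm_num) (by norm_num) (by positivity))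
  have hexp : ∀ p : ℝ, 1/α ≤ p → t ^ p ≤ t ^ (1/α) :=
    fun p hp => Real.rpow_le_rpow_of_exponent_ge ht0 ht1.le hp
  have hterm_nonneg : ∀ j : ℕ,
      0 ≤ (t ^ (2*b) - t ^ ((2*(j:ℝ)+1)/α)) / (((2*(j:ℝ)+1)/α)^2 - (2*b)^2) := by
    intro j
    rcases (hbj j).lt_or_gt with h | h
    · apply div_nonneg
      · exact sub_nonneg.2 (Real.rpow_le_rpow_of_exponent_ge ht0 ht1.le h.le)
      · exact sub_nonneg.2 (by nlinarith [hspos j])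
    · rw [div_nonneg_iff]
      right
      constructor
      · exact sub_nonpos.2 (Real.rpow_le_rpow_of_exponent_ge ht0 ht1.le h.le)
      · exact sub_nonpos.2 (by nlinarith [hspos j, hb2])
  have hterm_le : ∀ j : ℕ,
      (t ^ (2*b) - t ^ ((2*(j:ℝ)+1)/α)) / (((2*(j:ℝ)+1)/α)^2 - (2*b)^2)
        ≤ t ^ (1/α) * (1/|((2*(j:ℝ)+1)/α)^2 - (2*b)^2|) := by
    intro j
    have h2b' : t ^ (2*b) ≤ t ^ (1/α) := hexp _ h2b.le
    have hsj : t ^ ((2*(j:ℝ)+1)/α) ≤ t ^ (1/α) := hexp _ (hs1α j)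
    have hnn1 : 0 ≤ t ^ (2*b) := Real.rpow_nonneg ht0.le _
    have hnn2 : 0 ≤ t ^ ((2*(j:ℝ)+1)/α) := Real.rpow_nonneg ht0.le _
    have habs : |t ^ (2*b) - t ^ ((2*(j:ℝ)+1)/α)| ≤ t ^ (1/α) :=
      abs_sub_le_iff.2 ⟨by linarith, by linarith⟩
    calc (t ^ (2*b) - t ^ ((2*(j:ℝ)+1)/α)) / (((2*(j:ℝ)+1)/α)^2 - (2*b)^2)
        = |t ^ (2*b) - t ^ ((2*(j:ℝ)+1)/α)| / |((2*(j:ℝ)+1)/α)^2 - (2*b)^2| := by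
          rw [← abs_div, abs_of_nonneg (hterm_nonneg j)]
      _ ≤ t ^ (1/α) / |((2*(j:ℝ)+1)/α)^2 - (2*b)^2| := by gcongr
      _ = t ^ (1/α) * (1/|((2*(j:ℝ)+1)/α)^2 - (2*b)^2|) := by ring
  have hsummable : Summable (fun j : ℕ =>
      (t ^ (2*b) - t ^ ((2*(j:ℝ)+1)/α)) / (((2*(j:ℝ)+1)/α)^2 - (2*b)^2)) :=
    Summable.of_nonneg_of_le hterm_nonneg hterm_le (hU.mul_left _)
  refine ⟨hsummable, ?_, ?_⟩
  · -- lower bound via the j = 0 term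
    have h0 : (t ^ (2*b) - t ^ ((2*((0:ℕ):ℝ)+1)/α)) / (((2*((0:ℕ):ℝ)+1)/α)^2 - (2*b)^2)
        ≤ ∑' j : ℕ, (t ^ (2*b) - t ^ ((2*(j:ℝ)+1)/α)) / (((2*(j:ℝ)+1)/α)^2 - (2*b)^2) :=
      Summable.le_tsum hsummable 0 (fun j _ => hterm_nonneg j)
    have h0eq : (2*((0:ℕ):ℝ)+1)/α = 1/α := by norm_num
    rw [h0eq] at h0
    refine le_trans ?_ h0
    -- t^{2b} ≤ t^{1/α}/2
    have hkey : t ^ (2*b) ≤ t ^ (1/α) / 2 := by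
      have h2bsplit : (2*b : ℝ) = 1/α + e := by rw [he]; ring
      rw [h2bsplit, Real.rpow_add ht0]
      have hte : t ^ e ≤ ((1/2 : ℝ) ^ (1/e)) ^ e :=
        Real.rpow_le_rpow ht0.le htlt.le he0.le
      have ht₀e : ((1/2 : ℝ) ^ (1/e)) ^ e = 1/2 := by
        rw [← Real.rpow_mul (by norm_num : (0:ℝ) ≤ 1/2), one_div_mul_cancel he0.ne',
          Real.rpow_one]
      have := mul_le_mul_of_nonneg_left (hte.trans_eq ht₀e) (Real.rpow_nonneg ht0.le (1/α))
      linarith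
    have hrew : (t ^ (2*b) - t ^ (1/α)) / ((1/α)^2 - (2*b)^2)
        = (t ^ (1/α) - t ^ (2*b)) / D := by
      rw [show (1/α)^2 - (2*b)^2 = -D by rw [hD]; ring, div_neg, ← neg_div, neg_sub]
    rw [hrew, show (1:ℝ)/(2*D) * t ^ (1/α) = (t ^ (1/α)/2)/D by field_simp]
    gcongr
    linarith
  · -- upper bound
    have := Summable.tsum_le_tsum hterm_le hsummable (hU.mul_left _)
    rw [tsum_mul_left] at this
    refine this.trans ?_
    rw [← hUdef]
    have : 0 ≤ t ^ (1/α) := Real.rpow_nonneg ht0.le _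
    nlinarith

open MeasureTheory intervalIntegral in
/-- for `0 < α ≤ 2`, `b > 0` with `2b > 1/α` and `2b ≠ (2j+1)/α` for all
`j : ℕ`, and `a > 0`, the explicit balayage mass `F(R)` of the sector satisfies
`c R^{1/α} ≤ F(R) ≤ C R^{1/α}` for all small `R`. -/
theorem stmt_12 (α b a : ℝ) (hα0 : 0 < α) (hα2 : α ≤ 2) (hb : 0 < b) (h2b : 2 * b > 1 / α)
    (hbj : ∀ j : ℕ, 2 * b ≠ (2 * (j:ℝ) + 1) / α) (ha : 0 < a) (F : ℝ → ℝ)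
    (hF : ∀ R : ℝ, F R = 2 * ∫ r in (0:ℝ)..R,
      (4 * a ^ (2 * α * b) / (α * Real.pi * r)) *
        ∑' j : ℕ, ((r / a ^ α) ^ (2 * b) - (r / a ^ α) ^ ((2 * (j:ℝ) + 1) / α)) /
          (((2 * (j:ℝ) + 1) / α) ^ 2 - (2 * b) ^ 2)) :
    ∃ c > (0:ℝ), ∃ C > (0:ℝ), ∃ Rb ∈ Ioo (0:ℝ) (a ^ α), ∀ R ∈ Ioo (0:ℝ) Rb,
      c * R ^ (1 / α) ≤ F R ∧ F R ≤ C * R ^ (1 / α) := by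
  obtain ⟨cL, hcL, cU, hcU, t₀, ht₀, hsum⟩ := aux_sum α b hα0 hb h2b hbj
  have hα0' : (0:ℝ) < 1/α := by positivity
  have hApos : 0 < a ^ α := Real.rpow_pos_of_pos ha α
  have hπ : 0 < Real.pi := Real.pi_pos
  have hc₀ : 0 < 4 * a ^ (2 * α * b) / (α * Real.pi) := by positivity
  set A : ℝ := a ^ α with hAdef
  set c₀ : ℝ := 4 * a ^ (2 * α * b) / (α * Real.pi) with hc₀def
  set g : ℝ → ℝ := fun r =>
      (4 * a ^ (2 * α * b) / (α * Real.pi * r)) *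
        ∑' j : ℕ, ((r / A) ^ (2 * b) - (r / A) ^ ((2 * (j:ℝ) + 1) / α)) /
          (((2 * (j:ℝ) + 1) / α) ^ 2 - (2 * b) ^ 2) with hgdef
  have hAr : 0 < A ^ (1/α) := Real.rpow_pos_of_pos hApos _
  set KL : ℝ := c₀ * cL / A ^ (1/α) with hKL
  set KU : ℝ := c₀ * cU / A ^ (1/α) with hKU
  have hKL0 : 0 < KL := by positivity
  have hKU0 : 0 < KU := by positivity
  refine ⟨2*α*KL, by positivity, 2*α*KU, by positivity, t₀ * A,
    ⟨mul_pos ht₀.1 hApos, by nlinarith [ht₀.1, ht₀.2, hApos]⟩, ?_⟩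
  rintro R ⟨hR0, hRRb⟩
  -- pointwise bounds on the integrand
  have key : ∀ r ∈ Ioc (0:ℝ) R,
      KL * r ^ (1/α - 1) ≤ g r ∧ g r ≤ KU * r ^ (1/α - 1) := by
    rintro r ⟨hr0, hrR⟩
    have htmem : r / A ∈ Ioo (0:ℝ) t₀ :=
      ⟨div_pos hr0 hApos, (div_lt_iff₀ hApos).2 (by nlinarith)⟩
    obtain ⟨hsm, hlb, hub⟩ := hsum (r/A) htmem
    have hfrac : (4 * a ^ (2 * α * b) / (α * Real.pi * r)) = c₀ / r := by
      rw [hc₀def, div_div]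
    have hdivpos : 0 < c₀ / r := div_pos hc₀ hr0
    have hTα : (r/A) ^ (1/α) = r ^ (1/α) / A ^ (1/α) := Real.div_rpow hr0.le hApos.le (1/α)
    have hrpow : r ^ (1/α - 1) = r ^ (1/α) / r := by
      rw [Real.rpow_sub hr0, Real.rpow_one]
    constructor
    · have h1 := mul_le_mul_of_nonneg_left hlb hdivpos.le
      rw [hgdef]
      simp only []
      rw [hfrac]
      refine le_trans (le_of_eq ?_) h1
      rw [hTα, hKL, hrpow]
      field_simp
    · have h1 := mul_le_mul_of_nonneg_left hub hdivpos.le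
      rw [hgdef]
      simp only []
      rw [hfrac]
      refine le_trans h1 (le_of_eq ?_)
      rw [hTα, hKU, hrpow]
      field_simp
  -- integrability of the power function
  have hφ : IntervalIntegrable (fun x : ℝ => x ^ (1/α - 1)) volume 0 R :=
    intervalIntegrable_rpow' (by linarith)
  have hφIoc : IntegrableOn (fun x : ℝ => x ^ (1/α - 1)) (Ioc 0 R) volume :=
    (intervalIntegrable_iff_integrableOn_Ioc_of_le hR0.le).1 hφ
  -- measurability of g
  have hmeas : AEStronglyMeasurable g (volume.restrict (Ioc 0 R)) := by
    refine aestronglyMeasurable_of_tendsto_ae (f := fun N r =>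
        (4 * a ^ (2 * α * b) / (α * Real.pi * r)) *
          ∑ j ∈ Finset.range N, ((r / A) ^ (2 * b) - (r / A) ^ ((2 * (j:ℝ) + 1) / α)) /
            (((2 * (j:ℝ) + 1) / α) ^ 2 - (2 * b) ^ 2)) Filter.atTop (fun N => ?_) ?_
    · apply Measurable.aestronglyMeasurable
      apply Measurable.mul
      · fun_prop
      · apply Finset.measurable_sum
        intro j _
        fun_prop
    · filter_upwards [ae_restrict_mem measurableSet_Ioc] with r hr
      have htmem : r / A ∈ Ioo (0:ℝ) t₀ :=
        ⟨div_pos hr.1 hApos, (div_lt_iff₀ hApos).2 (by nlinarith [hr.1, hr.2])⟩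
      obtain ⟨hsm, -, -⟩ := hsum (r/A) htmem
      exact (hsm.hasSum.tendsto_sum_nat).const_mul _
  -- integrability of g
  have hgnn : ∀ r ∈ Ioc (0:ℝ) R, 0 ≤ g r := by
    intro r hr
    have h1 : (0:ℝ) ≤ KL * r ^ (1/α - 1) :=
      mul_nonneg hKL0.le (Real.rpow_nonneg hr.1.le _)
    linarith [(key r hr).1]
  have hgint : IntegrableOn g (Ioc 0 R) volume := by
    refine Integrable.mono (hφIoc.const_mul KU) hmeas ?_
    filter_upwards [ae_restrict_mem measurableSet_Ioc] with r hr
    rw [Real.norm_eq_abs, Real.norm_eq_abs, abs_of_nonneg (hgnn r hr),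
      abs_of_nonneg (mul_nonneg hKU0.le (Real.rpow_nonneg hr.1.le _))]
    exact (key r hr).2
  -- value of the comparison integral
  have hval : ∫ r in Ioc (0:ℝ) R, r ^ (1/α - 1) = α * R ^ (1/α) := by
    rw [← integral_of_le hR0.le,
      integral_rpow (Or.inl (by linarith)),
      show 1/α - 1 + 1 = 1/α by ring, Real.zero_rpow (ne_of_gt hα0'), sub_zero]
    rw [div_div_eq_mul_div, div_one, mul_comm]
  have hIl : ∫ r in Ioc (0:ℝ) R, KL * r ^ (1/α - 1) ≤ ∫ r in Ioc (0:ℝ) R, g r :=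
    setIntegral_mono_on (hφIoc.const_mul KL) hgint measurableSet_Ioc
      (fun x hx => (key x hx).1)
  have hIu : ∫ r in Ioc (0:ℝ) R, g r ≤ ∫ r in Ioc (0:ℝ) R, KU * r ^ (1/α - 1) :=
    setIntegral_mono_on hgint (hφIoc.const_mul KU) measurableSet_Ioc
      (fun x hx => (key x hx).2)
  rw [MeasureTheory.integral_const_mul, hval] at hIl hIu
  have hFR : F R = 2 * ∫ r in Ioc (0:ℝ) R, g r := by
    rw [hF R, integral_of_le hR0.le]
  rw [hFR]
  constructor
  · nlinarith [hIl]
  · nlinarith [hIu]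
end

section
/- Let α ∈ (0, 2], γ ∈ (0, 1], r₁ > 0, K ≥ 0, and let w : [0, r₁] → ℂ be continuous with w(0) = 0, differentiable on (0, r₁), and satisfying |w'(r) − 1| ≤ K r^γ for all r ∈ (0, r₁). Then: (i) |w(r) − r| ≤ (K/(1+γ)) r^{1+γ} for all r ∈ [0, r₁]; and (ii) there exist r₂ ∈ (0, r₁] and K' ≥ 0 such that Re w(r) > 0 for r ∈ (0, r₂), the function φ(r) := w(r)^{1/α} (principal complex power) is differentiable on (0, r₂) with φ'(r) = (1/α) w(r)^{1/α − 1} w'(r), and |φ'(r) − (1/α) r^{1/α − 1}| ≤ K' r^{1/α − 1 + γ} for all r ∈ (0, r₂). -/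
open Set Filter Topology

/-- If `r/2 ≤ x ≤ 2r`, then `x ^ t ≤ 2 ^ |t| * r ^ t`. -/
lemma aux_rpow_bound {r x t : ℝ} (hr : 0 < r) (h1 : r / 2 ≤ x) (h2 : x ≤ 2 * r) :
    x ^ t ≤ 2 ^ |t| * r ^ t := by
  rcases le_or_gt 0 t with ht | ht
  · calc x ^ t ≤ (2 * r) ^ t := Real.rpow_le_rpow (by linarith) h2 ht
      _ = 2 ^ t * r ^ t := Real.mul_rpow (by norm_num) hr.le
      _ ≤ 2 ^ |t| * r ^ t := by rw [abs_of_nonneg ht]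
  · calc x ^ t ≤ (r / 2) ^ t :=
        Real.rpow_le_rpow_of_nonpos (by positivity) h1 ht.le
      _ = 2 ^ |t| * r ^ t := by
          rw [abs_of_neg ht, div_eq_mul_inv, Real.mul_rpow hr.le (by norm_num),
            Real.inv_rpow (by norm_num), ← Real.rpow_neg (by norm_num)]
          ring

/-- if `w : [0, r₁] → ℂ` is continuous with `w 0 = 0`, differentiable on
`(0, r₁)` with `|w'(r) − 1| ≤ K r^γ`, then (i) `|w(r) − r| ≤ (K/(1+γ)) r^{1+γ}`, and
(ii) near `0` one has `Re w(r) > 0`, the function `φ(r) = w(r)^{1/α}` (principal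
complex power) has derivative `φ'(r) = (1/α) w(r)^{1/α−1} w'(r)` and
`|φ'(r) − (1/α) r^{1/α−1}| ≤ K' r^{1/α−1+γ}`. -/
theorem stmt_13 (α γ r₁ K : ℝ) (hα : α ∈ Ioc (0:ℝ) 2) (hγ : γ ∈ Ioc (0:ℝ) 1)
    (hr₁ : 0 < r₁) (hK : 0 ≤ K) (w w' : ℝ → ℂ)
    (hwc : ContinuousOn w (Icc 0 r₁)) (hw0 : w 0 = 0)
    (hwd : ∀ r ∈ Ioo (0:ℝ) r₁, HasDerivAt w (w' r) r)
    (hw' : ∀ r ∈ Ioo (0:ℝ) r₁, ‖w' r - 1‖ ≤ K * r ^ γ) :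
    (∀ r ∈ Icc (0:ℝ) r₁, ‖w r - (r : ℂ)‖ ≤ K / (1 + γ) * r ^ (1 + γ)) ∧
    ∃ r₂ ∈ Ioc (0:ℝ) r₁, ∃ K' ≥ (0:ℝ), ∀ r ∈ Ioo (0:ℝ) r₂,
      0 < (w r).re ∧
      HasDerivAt (fun s : ℝ => w s ^ (1 / (α:ℂ)))
        ((1 / (α:ℂ)) * w r ^ (1 / (α:ℂ) - 1) * w' r) r ∧
      ‖(1 / (α:ℂ)) * w r ^ (1 / (α:ℂ) - 1) * w' r - ((1 / α * r ^ (1 / α - 1) : ℝ) : ℂ)‖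
        ≤ K' * r ^ (1 / α - 1 + γ) := by
  obtain ⟨hα0, hα2⟩ := hα
  obtain ⟨hγ0, hγ1⟩ := hγ
  have h1γ : (0:ℝ) < 1 + γ := by linarith
  set C₀ : ℝ := K / (1 + γ) with hC₀def
  have hC₀ : 0 ≤ C₀ := div_nonneg hK h1γ.le
  -- Part (i)
  have parti : ∀ r ∈ Icc (0:ℝ) r₁, ‖w r - (r : ℂ)‖ ≤ C₀ * r ^ (1 + γ) := by
    rintro r ⟨hr0, hrr⟩
    rcases eq_or_lt_of_le hr0 with rfl | hr0
    · simp [hw0, Real.zero_rpow h1γ.ne']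
    have key : ∀ ε ∈ Ioo (0:ℝ) r, ‖w r - (r : ℂ)‖ ≤ C₀ * r ^ (1 + γ) + ‖w ε - (ε : ℂ)‖ := by
      rintro ε ⟨hε0, hεr⟩
      set B : ℝ → ℝ := fun x => C₀ * x ^ (1 + γ) - C₀ * ε ^ (1 + γ) + ‖w ε - (ε : ℂ)‖ with hB
      have hBd : ∀ x, HasDerivAt B (C₀ * ((1 + γ) * x ^ ((1 + γ) - 1))) x := by
        intro x
        exact (((Real.hasDerivAt_rpow_const (Or.inr (by linarith))).const_mul
          C₀).sub_const _).add_const _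
      have main := image_norm_le_of_norm_deriv_right_le_deriv_boundary
        (f := fun x => w x - (x : ℂ)) (f' := fun x => w' x - 1) (a := ε) (b := r)
        (B := B) (B' := fun x => C₀ * ((1 + γ) * x ^ ((1 + γ) - 1)))
        (by
          exact (hwc.mono (Icc_subset_Icc hε0.le hrr)).sub
            Complex.continuous_ofReal.continuousOn)
        (by
          rintro x ⟨hx1, hx2⟩
          exact ((hwd x ⟨hε0.trans_le hx1, hx2.trans_le hrr⟩).sub
            Complex.ofRealCLM.hasDerivAt).hasDerivWithinAt)
        (by simp [hB])
        hBd
        (by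
          rintro x ⟨hx1, hx2⟩
          have h1 : ‖w' x - 1‖ ≤ K * x ^ γ := hw' x ⟨hε0.trans_le hx1, hx2.trans_le hrr⟩
          have h2 : C₀ * ((1 + γ) * x ^ ((1 + γ) - 1)) = K * x ^ γ := by
            rw [show (1 + γ) - 1 = γ by ring, ← mul_assoc, div_mul_cancel₀ K h1γ.ne']
          exact le_of_le_of_eq h1 h2.symm)
      have := main (right_mem_Icc.mpr hεr.le)
      have hεp : 0 ≤ C₀ * ε ^ (1 + γ) := by positivity
      simp only [hB] at this
      linarith
    have hne : (𝓝[Ioo (0:ℝ) r] 0).NeBot := by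
      refine mem_closure_iff_nhdsWithin_neBot.mp ?_
      rw [closure_Ioo hr0.ne]
      exact ⟨le_rfl, hr0.le⟩
    have tendw : Filter.Tendsto (fun ε : ℝ => ‖w ε - (ε : ℂ)‖) (𝓝[Ioo (0:ℝ) r] 0)
        (𝓝 0) := by
      have h1 : Filter.Tendsto (fun ε : ℝ => ‖w ε - (ε : ℂ)‖) (𝓝[Icc (0:ℝ) r₁] 0)
          (𝓝 ‖w 0 - ((0:ℝ) : ℂ)‖) :=
        ((hwc 0 ⟨le_rfl, hr₁.le⟩).sub Complex.continuous_ofReal.continuousWithinAt).norm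
      have h2 : ‖w 0 - ((0:ℝ) : ℂ)‖ = 0 := by simp [hw0]
      rw [h2] at h1
      exact h1.mono_left (nhdsWithin_mono _
        (Ioo_subset_Icc_self.trans (Icc_subset_Icc le_rfl hrr)))
    have := ge_of_tendsto (tendsto_const_nhds.add tendw)
      (by filter_upwards [self_mem_nhdsWithin] with ε hε using key ε hε)
    simpa using this
  refine ⟨parti, ?_⟩
  -- Part (ii)
  set c : ℝ := 1 / α - 1 with hc
  set δ : ℝ := (2 * (C₀ + 1))⁻¹ ^ γ⁻¹ with hδdef
  have hδ0 : 0 < δ := Real.rpow_pos_of_pos (by positivity) _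
  have hδγ : δ ^ γ = (2 * (C₀ + 1))⁻¹ := by
    rw [hδdef, ← Real.rpow_mul (by positivity), inv_mul_cancel₀ hγ0.ne', Real.rpow_one]
  set r₂ : ℝ := min r₁ δ with hr₂def
  have hr₂0 : 0 < r₂ := lt_min hr₁ hδ0
  set K' : ℝ := (1 / α) * ((2:ℝ) ^ |c| * K + |c| * (2:ℝ) ^ |c - 1| * C₀) with hK'def
  have hK'0 : 0 ≤ K' := by positivity
  refine ⟨r₂, ⟨hr₂0, min_le_left _ _⟩, K', hK'0, ?_⟩
  rintro r ⟨hr0, hrr₂⟩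
  have hrr₁ : r < r₁ := hrr₂.trans_le (min_le_left _ _)
  have hrδ : r < δ := hrr₂.trans_le (min_le_right _ _)
  have hi : ‖w r - (r : ℂ)‖ ≤ C₀ * r ^ (1 + γ) := parti r ⟨hr0.le, hrr₁.le⟩
  have h2 : C₀ * r ^ (1 + γ) ≤ r / 2 := by
    have e1 : r ^ (1 + γ) = r * r ^ γ := by
      rw [Real.rpow_add hr0, Real.rpow_one]
    have e2 : r ^ γ ≤ δ ^ γ := Real.rpow_le_rpow hr0.le hrδ.le hγ0.le
    have e3 : C₀ * δ ^ γ ≤ 1 / 2 := by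
      rw [hδγ, mul_inv_le_iff₀ (by positivity)]
      linarith
    have e4 : C₀ * r ^ γ ≤ 1 / 2 := le_trans (by nlinarith [Real.rpow_nonneg hr0.le γ]) e3
    have hrγ0 : 0 ≤ r ^ γ := Real.rpow_nonneg hr0.le γ
    calc C₀ * r ^ (1 + γ) = (C₀ * r ^ γ) * r := by rw [e1]; ring
      _ ≤ (1 / 2) * r := by nlinarith
      _ = r / 2 := by ring
  have hbound : ‖w r - (r : ℂ)‖ ≤ r / 2 := hi.trans h2
  have hre2 : r / 2 ≤ (w r).re := by
    have h3 : |(w r - (r : ℂ)).re| ≤ ‖w r - (r : ℂ)‖ := Complex.abs_re_le_norm _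
    have h4 : (w r - (r : ℂ)).re = (w r).re - r := by simp
    rw [h4] at h3
    rcases abs_le.mp h3 with ⟨h5, _⟩
    linarith
  have hre : 0 < (w r).re := lt_of_lt_of_le (by positivity) hre2
  have hslit : w r ∈ Complex.slitPlane := Complex.mem_slitPlane_iff.mpr (Or.inl hre)
  have hd : HasDerivAt (fun s : ℝ => w s ^ (1 / (α:ℂ)))
      ((1 / (α:ℂ)) * w r ^ (1 / (α:ℂ) - 1) * w' r) r := by
    have := (Complex.hasStrictDerivAt_cpow_const (c := 1 / (α:ℂ))
      hslit).hasDerivAt.comp r (hwd r ⟨hr0, hrr₁⟩)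
    simpa [Function.comp_def] using this
  refine ⟨hre, hd, ?_⟩
  -- the estimate
  have hwlo : r / 2 ≤ ‖w r‖ := hre2.trans (Complex.re_le_norm _)
  have hnr : ‖(r : ℂ)‖ = r := by
    rw [Complex.norm_real, Real.norm_of_nonneg hr0.le]
  have hwhi : ‖w r‖ ≤ 2 * r := by
    calc ‖w r‖ = ‖(w r - (r : ℂ)) + (r : ℂ)‖ := by ring_nf
      _ ≤ ‖w r - (r : ℂ)‖ + ‖(r : ℂ)‖ := norm_add_le _ _
      _ ≤ r / 2 + r := by rw [hnr]; linarith
      _ ≤ 2 * r := by linarith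
  set cc : ℂ := 1 / (α:ℂ) - 1 with hccdef
  have hcc : cc = ((c : ℝ) : ℂ) := by rw [hc]; push_cast; ring
  have habs_cpow : ∀ z : ℂ, ‖z ^ cc‖ = ‖z‖ ^ c := by
    intro z
    rw [hcc, Complex.norm_cpow_real]
  -- MVT for z ↦ z ^ cc on the convex set s
  set s : Set ℂ := {z : ℂ | r / 2 ≤ z.re} ∩ Metric.closedBall 0 (2 * r) with hsdef
  have hconv : Convex ℝ s := (convex_halfSpace_re_ge (r / 2)).inter (convex_closedBall _ _)
  set C : ℝ := |c| * 2 ^ |c - 1| * r ^ (c - 1) with hCdef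
  have hmem_w : w r ∈ s := ⟨hre2, by simpa [Metric.mem_closedBall] using hwhi⟩
  have hmem_r : (r : ℂ) ∈ s := by
    constructor
    · simp only [mem_setOf_eq, Complex.ofReal_re]; linarith
    · simp only [Metric.mem_closedBall, dist_zero_right, hnr]; linarith
  have hzlo : ∀ z ∈ s, r / 2 ≤ ‖z‖ := fun z hz => hz.1.trans (Complex.re_le_norm _)
  have hzhi : ∀ z ∈ s, ‖z‖ ≤ 2 * r := fun z hz => by
    simpa [Metric.mem_closedBall] using hz.2
  have hderiv_s : ∀ z ∈ s, HasFDerivWithinAt (fun z : ℂ => z ^ cc)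
      (ContinuousLinearMap.smulRight (1 : ℂ →L[ℂ] ℂ) (cc * z ^ (cc - 1))) s z := by
    intro z hz
    have hzslit : z ∈ Complex.slitPlane :=
      Complex.mem_slitPlane_iff.mpr (Or.inl (lt_of_lt_of_le (by positivity) hz.1))
    have := (hasDerivAt_id z).cpow_const hzslit (c := cc)
    simpa [ContinuousLinearMap.smulRight_one_eq_toSpanSingleton] using this.hasDerivWithinAt.hasFDerivWithinAt
  have hbd : ∀ z ∈ s, ‖ContinuousLinearMap.smulRight (1 : ℂ →L[ℂ] ℂ)
      (cc * z ^ (cc - 1))‖ ≤ C := by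
    intro z hz
    rw [ContinuousLinearMap.norm_smulRight_apply, norm_one, one_mul, norm_mul]
    have h1 : ‖cc‖ = |c| := by rw [hcc, Complex.norm_real, Real.norm_eq_abs]
    have h2 : ‖z ^ (cc - 1)‖ = ‖z‖ ^ (c - 1) := by
      have : cc - 1 = ((c - 1 : ℝ) : ℂ) := by rw [hcc]; push_cast; ring
      rw [this, Complex.norm_cpow_real]
    rw [h1, h2, hCdef, mul_assoc]
    refine mul_le_mul_of_nonneg_left ?_ (abs_nonneg _)
    exact aux_rpow_bound hr0 (hzlo z hz) (hzhi z hz)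
  have mvt := hconv.norm_image_sub_le_of_norm_hasFDerivWithin_le hderiv_s hbd hmem_r hmem_w
  -- bound on ‖w r ^ cc‖
  have hpoww : ‖w r ^ cc‖ ≤ 2 ^ |c| * r ^ c := by
    rw [habs_cpow]
    exact aux_rpow_bound hr0 hwlo hwhi
  have hw'r : ‖w' r - 1‖ ≤ K * r ^ γ := hw' r ⟨hr0, hrr₁⟩
  -- rewrite target
  have htarget : ((1 / α * r ^ (1 / α - 1) : ℝ) : ℂ) = (1 / (α:ℂ)) * (r : ℂ) ^ cc := by
    rw [hcc, ← hc]
    push_cast [Complex.ofReal_cpow hr0.le]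
    ring
  have hsplit : (1 / (α:ℂ)) * w r ^ cc * w' r - (1 / (α:ℂ)) * (r : ℂ) ^ cc
      = (1 / (α:ℂ)) * (w r ^ cc * (w' r - 1) + (w r ^ cc - (r : ℂ) ^ cc)) := by ring
  have hnα : ‖(1 / (α:ℂ))‖ = 1 / α := by
    rw [show (1 / (α:ℂ)) = ((1 / α : ℝ) : ℂ) by push_cast; ring, Complex.norm_real,
      Real.norm_of_nonneg (by positivity)]
  have hCnn : 0 ≤ C := by positivity
  have hmvt2 : ‖w r ^ cc - (r : ℂ) ^ cc‖ ≤ C * (C₀ * r ^ (1 + γ)) :=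
    mvt.trans (mul_le_mul_of_nonneg_left hi hCnn)
  calc ‖(1 / (α:ℂ)) * w r ^ (1 / (α:ℂ) - 1) * w' r - ((1 / α * r ^ (1 / α - 1) : ℝ) : ℂ)‖
      = ‖(1 / (α:ℂ))‖ * ‖w r ^ cc * (w' r - 1) + (w r ^ cc - (r : ℂ) ^ cc)‖ := by
        rw [htarget, ← hccdef, hsplit, norm_mul]
    _ ≤ (1 / α) * (‖w r ^ cc‖ * ‖w' r - 1‖ + ‖w r ^ cc - (r : ℂ) ^ cc‖) := by
        rw [hnα]
        refine mul_le_mul_of_nonneg_left ?_ (by positivity)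
        exact (norm_add_le _ _).trans (by rw [norm_mul])
    _ ≤ (1 / α) * ((2 ^ |c| * r ^ c) * (K * r ^ γ) + C * (C₀ * r ^ (1 + γ))) := by
        refine mul_le_mul_of_nonneg_left ?_ (by positivity)
        refine add_le_add ?_ hmvt2
        exact mul_le_mul hpoww hw'r (norm_nonneg _) (by positivity)
    _ = K' * r ^ (1 / α - 1 + γ) := by
        have e1 : r ^ c * r ^ γ = r ^ (c + γ) := (Real.rpow_add hr0 c γ).symm
        have e4 : r ^ (c - 1) * r ^ (1 + γ) = r ^ c * r ^ γ := by
          rw [← Real.rpow_add hr0, ← Real.rpow_add hr0]; congr 1; ring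
        have e3 : (1 / α - 1 + γ) = c + γ := by rw [hc]
        rw [e3, hK'def, hCdef, ← e1]
        linear_combination (1 / α) * |c| * 2 ^ |c - 1| * C₀ * e4
end

section
/- Let α ∈ (0, 2], γ ∈ (0, 1], r₁ ∈ (0, 1], K ≥ 0, and let w : [0, r₁] → ℂ be continuous with w(0) = 0, differentiable on (0, r₁), and satisfying |w'(r) − 1| ≤ K r^γ for all r ∈ (0, r₁). Define h(r) := w(r^α)^{1/α} (principal complex power) for r ∈ (0, r₁^{1/α}). Then there exist r₃ ∈ (0, r₁^{1/α}] and K'' ≥ 0 such that h is differentiable on (0, r₃) and for all r ∈ (0, r₃): |h(r) − r| ≤ K'' r^{1+αγ} and |h'(r) − 1| ≤ K'' r^{αγ}. -/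
open Set Filter Topology

/-- Norm bound for `u ^ e - 1` when `u` is close to `1`. -/
lemma cpow_near_one_est (e u : ℂ) (hu : ‖u - 1‖ ≤ 1 / (3 * (‖e‖ + 1))) :
    ‖u ^ e - 1‖ ≤ 3 * (‖e‖ + 1) * ‖u - 1‖ := by
  have hne : (0:ℝ) < ‖e‖ + 1 := by positivity
  have hu2 : ‖u - 1‖ ≤ 1 / 2 := by
    refine hu.trans ?_
    rw [div_le_div_iff₀ (by positivity) (by norm_num)]
    nlinarith [norm_nonneg e]
  have hu0 : u ≠ 0 := by
    intro h0
    rw [h0] at hu2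
    norm_num at hu2
  have hlog : ‖Complex.log u‖ ≤ 3 / 2 * ‖u - 1‖ := by
    have := Complex.norm_log_one_add_half_le_self (z := u - 1) hu2
    have h1 : 1 + (u - 1) = u := by ring
    rwa [h1] at this
  have h3 : ‖u - 1‖ * (3 * (‖e‖ + 1)) ≤ 1 := by
    rw [le_div_iff₀ (by positivity)] at hu
    exact hu
  have habs : ‖Complex.log u * e‖ ≤ 1 := by
    rw [norm_mul]
    have h4 : ‖Complex.log u‖ * ‖e‖ ≤ (3 / 2 * ‖u - 1‖) * (‖e‖ + 1) := by
      have := mul_le_mul hlog (by linarith : ‖e‖ ≤ ‖e‖ + 1) (norm_nonneg e)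
        (by positivity : (0:ℝ) ≤ 3 / 2 * ‖u - 1‖)
      linarith
    nlinarith [norm_nonneg (u - 1)]
  have hexp := Complex.norm_exp_sub_one_le (x := Complex.log u * e)
    (by exact habs)
  rw [Complex.cpow_def_of_ne_zero hu0]
  calc ‖Complex.exp (Complex.log u * e) - 1‖ ≤ 2 * ‖Complex.log u * e‖ := by
        exact hexp
    _ ≤ 2 * (3 / 2 * ‖u - 1‖ * ‖e‖) := by
        rw [norm_mul]
        have := mul_le_mul_of_nonneg_right hlog (norm_nonneg e)
        linarith
    _ ≤ 3 * (‖e‖ + 1) * ‖u - 1‖ := by nlinarith [norm_nonneg (u - 1), norm_nonneg e]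

/-- Splitting a complex power of a product with a positive real. -/
lemma ofReal_mul_cpow_split {s : ℝ} (hs : 0 < s) {u : ℂ} (hu : u ≠ 0) (e : ℂ) :
    ((s : ℂ) * u) ^ e = (s : ℂ) ^ e * u ^ e := by
  have hs0 : (s : ℂ) ≠ 0 := by exact_mod_cast hs.ne'
  rw [Complex.cpow_def_of_ne_zero (mul_ne_zero hs0 hu), Complex.cpow_def_of_ne_zero hs0,
    Complex.cpow_def_of_ne_zero hu, ← Complex.exp_add, Complex.log_ofReal_mul hs hu,
    Complex.ofReal_log hs.le]
  ring_nf

lemma w_dist_est (r₁ K γ : ℝ) (hγpos : 0 < γ) (hK : 0 ≤ K) (w w' : ℝ → ℂ)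
    (hwc : ContinuousOn w (Icc 0 r₁)) (hw0 : w 0 = 0)
    (hwd : ∀ r ∈ Ioo (0:ℝ) r₁, HasDerivAt w (w' r) r)
    (hw' : ∀ r ∈ Ioo (0:ℝ) r₁, ‖w' r - 1‖ ≤ K * r ^ γ)
    {s : ℝ} (hs : s ∈ Ioo (0:ℝ) r₁) : ‖w s - s‖ ≤ K * s ^ γ * s := by
  have hC : 0 ≤ K * s ^ γ := mul_nonneg hK (Real.rpow_nonneg hs.1.le γ)
  have key : ∀ ε ∈ Ioo (0:ℝ) s, ‖(w s - s) - (w ε - ε)‖ ≤ K * s ^ γ * (s - ε) := by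
    intro ε hε
    have hsub : Icc ε s ⊆ Icc 0 r₁ := Icc_subset_Icc hε.1.le hs.2.le
    have hcont : ContinuousOn (fun t : ℝ => w t - (t : ℂ)) (Icc ε s) :=
      (hwc.mono hsub).sub Complex.continuous_ofReal.continuousOn
    have hderiv : ∀ t ∈ Ico ε s,
        HasDerivWithinAt (fun t : ℝ => w t - (t : ℂ)) (w' t - 1) (Ici t) t := by
      intro t ht
      have htI : t ∈ Ioo (0:ℝ) r₁ := ⟨lt_of_lt_of_le hε.1 ht.1, lt_trans ht.2 hs.2⟩
      have hid : HasDerivAt (fun t : ℝ => (t : ℂ)) 1 t := by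
        exact Complex.ofRealCLM.hasDerivAt
      exact ((hwd t htI).sub hid).hasDerivWithinAt
    have hbound : ∀ t ∈ Ico ε s, ‖w' t - 1‖ ≤ K * s ^ γ := by
      intro t ht
      have htI : t ∈ Ioo (0:ℝ) r₁ := ⟨lt_of_lt_of_le hε.1 ht.1, lt_trans ht.2 hs.2⟩
      refine (hw' t htI).trans ?_
      exact mul_le_mul_of_nonneg_left (Real.rpow_le_rpow htI.1.le ht.2.le hγpos.le) hK
    have := norm_image_sub_le_of_norm_deriv_right_le_segment hcont hderiv hbound s
      ⟨hε.2.le, le_refl s⟩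
    simpa using this
  have hne : (𝓝[Ioo (0:ℝ) s] 0).NeBot := by
    rw [← mem_closure_iff_nhdsWithin_neBot, closure_Ioo hs.1.ne]
    exact ⟨le_refl 0, hs.1.le⟩
  have htend : Tendsto (fun ε : ℝ => ‖(w s - s) - (w ε - ε)‖) (𝓝[Ioo (0:ℝ) s] 0)
      (𝓝 ‖w s - s‖) := by
    have hw_tend : Tendsto w (𝓝[Ioo (0:ℝ) s] 0) (𝓝 0) := by
      have h0m : (0:ℝ) ∈ Icc 0 r₁ := ⟨le_refl 0, (lt_trans hs.1 hs.2).le⟩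
      have h1 := (hwc 0 h0m).tendsto
      rw [hw0] at h1
      exact h1.mono_left (nhdsWithin_mono 0 fun x hx => ⟨hx.1.le, hx.2.le.trans hs.2.le⟩)
    have hid : Tendsto (fun ε : ℝ => (ε : ℂ)) (𝓝[Ioo (0:ℝ) s] 0) (𝓝 0) := by
      have := (Complex.continuous_ofReal.tendsto 0).mono_left
        (nhdsWithin_le_nhds (s := Ioo (0:ℝ) s))
      simpa using this
    have h2 : Tendsto (fun ε : ℝ => (w s - s) - (w ε - ε)) (𝓝[Ioo (0:ℝ) s] 0)
        (𝓝 ((w s - s) - (0 - 0))) := tendsto_const_nhds.sub (hw_tend.sub hid)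
    simpa using h2.norm
  refine le_of_tendsto htend ?_
  filter_upwards [self_mem_nhdsWithin] with ε hε
  refine (key ε hε).trans ?_
  have : s - ε ≤ s := by linarith [hε.1]
  exact mul_le_mul_of_nonneg_left this hC

/-- with `w` as in Statement 13 and `r₁ ∈ (0, 1]`, the straightened
curve `h(r) := w(r^α)^{1/α}` (principal complex power) satisfies, for some
`r₃ ∈ (0, r₁^{1/α}]` and `K'' ≥ 0`, the bounds `|h(r) − r| ≤ K'' r^{1+αγ}` and
`|h'(r) − 1| ≤ K'' r^{αγ}` on `(0, r₃)`. -/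
theorem stmt_14 (α γ r₁ K : ℝ) (hα : α ∈ Ioc (0:ℝ) 2) (hγ : γ ∈ Ioc (0:ℝ) 1)
    (hr₁ : r₁ ∈ Ioc (0:ℝ) 1) (hK : 0 ≤ K) (w w' : ℝ → ℂ)
    (hwc : ContinuousOn w (Icc 0 r₁)) (hw0 : w 0 = 0)
    (hwd : ∀ r ∈ Ioo (0:ℝ) r₁, HasDerivAt w (w' r) r)
    (hw' : ∀ r ∈ Ioo (0:ℝ) r₁, ‖w' r - 1‖ ≤ K * r ^ γ)
    (h : ℝ → ℂ) (hh : ∀ r : ℝ, h r = w (r ^ α) ^ (1 / (α:ℂ))) :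
    ∃ r₃ ∈ Ioc (0:ℝ) (r₁ ^ (1 / α)), ∃ K'' ≥ (0:ℝ), ∀ r ∈ Ioo (0:ℝ) r₃,
      ‖h r - (r : ℂ)‖ ≤ K'' * r ^ (1 + α * γ) ∧
      ∃ d : ℂ, HasDerivAt h d r ∧ ‖d - 1‖ ≤ K'' * r ^ (α * γ) := by
  obtain ⟨hα0, hα2⟩ := hα
  obtain ⟨hγ0, hγ1⟩ := hγ
  obtain ⟨hr₁0, hr₁1⟩ := hr₁
  have hαne : α ≠ 0 := hα0.ne'
  set cc : ℂ := 1 / (α:ℂ) with hccdef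
  have hccast : ((1/α : ℝ) : ℂ) = cc := by rw [hccdef]; push_cast; ring
  set E : ℝ := (‖cc‖ + 1) + (‖cc - 1‖ + 1) with hEdef
  have hE1 : 1 ≤ E := by
    have := norm_nonneg cc; have := norm_nonneg (cc - 1)
    simp only [hEdef]; linarith
  have hE0 : 0 < E := lt_of_lt_of_le one_pos hE1
  have hEcc : ‖cc‖ + 1 ≤ E := by
    have := norm_nonneg (cc - 1); simp only [hEdef]; linarith
  have hEcc1 : ‖cc - 1‖ + 1 ≤ E := by
    have := norm_nonneg cc; simp only [hEdef]; linarith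
  set δ : ℝ := 1 / (3 * E) with hδdef
  have hδ0 : 0 < δ := by rw [hδdef]; positivity
  have hδ3 : δ ≤ 1/3 := by
    rw [hδdef]
    exact one_div_le_one_div_of_le (by norm_num) (by linarith)
  set t : ℝ := r₁ ^ (1/α) with htdef
  have ht0 : 0 < t := Real.rpow_pos_of_pos hr₁0 _
  have hαγ0 : 0 < α * γ := mul_pos hα0 hγ0
  set ρ : ℝ := (δ / (K + 1)) ^ (1 / (α * γ)) with hρdef
  have hρ0 : 0 < ρ := Real.rpow_pos_of_pos (by positivity) _
  refine ⟨min t ρ, ⟨lt_min ht0 hρ0, min_le_left _ _⟩, (3*E + 2) * K,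
    mul_nonneg (by linarith) hK, ?_⟩
  intro r hr
  obtain ⟨hr0, hrm⟩ := hr
  have hrt : r < t := lt_of_lt_of_le hrm (min_le_left _ _)
  have hrρ : r < ρ := lt_of_lt_of_le hrm (min_le_right _ _)
  set s : ℝ := r ^ α with hsdef
  have hs0 : 0 < s := Real.rpow_pos_of_pos hr0 α
  have hsr₁ : s < r₁ := by
    have h1 : r ^ α < t ^ α := Real.rpow_lt_rpow hr0.le hrt hα0
    have h2 : t ^ α = r₁ := by rw [htdef, one_div, Real.rpow_inv_rpow hr₁0.le hαne]
    rw [← h2]; exact h1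
  have hsmem : s ∈ Ioo (0:ℝ) r₁ := ⟨hs0, hsr₁⟩
  have hsγ : s ^ γ = r ^ (α * γ) := by
    rw [hsdef]; exact (Real.rpow_mul hr0.le α γ).symm
  have hKδ : K * s ^ γ ≤ δ := by
    have h1 : r ^ (α*γ) ≤ δ / (K+1) := by
      have h2 : r ^ (α*γ) < ρ ^ (α*γ) := Real.rpow_lt_rpow hr0.le hrρ hαγ0
      have h3 : ρ ^ (α*γ) = δ / (K+1) := by
        rw [hρdef, one_div, Real.rpow_inv_rpow (by positivity) hαγ0.ne']
      rw [h3] at h2; exact h2.le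
    rw [hsγ]
    calc K * r ^ (α*γ) ≤ K * (δ / (K+1)) := mul_le_mul_of_nonneg_left h1 hK
      _ ≤ δ := by
          rw [mul_div_assoc', div_le_iff₀ (by positivity : (0:ℝ) < K+1)]
          nlinarith [hδ0.le]
  have hwse := w_dist_est r₁ K γ hγ0 hK w w' hwc hw0 hwd hw' hsmem
  have hsC : (s:ℂ) ≠ 0 := by exact_mod_cast hs0.ne'
  set u : ℂ := w s / s with hudef
  have hwsu : w s = (s:ℂ) * u := by rw [hudef]; field_simp
  have hu1 : ‖u - 1‖ ≤ K * s ^ γ := by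
    have he : u - 1 = (w s - s) / s := by rw [hudef]; field_simp
    rw [he, norm_div]
    have hns : ‖(s:ℂ)‖ = s := by rw [Complex.norm_real]; exact abs_of_pos hs0
    rw [hns, div_le_iff₀ hs0]
    exact hwse
  have huδ : ‖u - 1‖ ≤ δ := hu1.trans hKδ
  have hu0 : u ≠ 0 := by
    intro h0
    rw [h0] at huδ
    simp at huδ
    linarith
  have hure : 1/2 ≤ u.re := by
    have h1 : |(u - 1).re| ≤ ‖u - 1‖ := by
      exact Complex.abs_re_le_norm _
    have h2 : (u - 1).re = u.re - 1 := by simp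
    rw [h2] at h1
    have := abs_le.mp (h1.trans (huδ.trans hδ3))
    linarith [this.1]
  have hslit : w s ∈ Complex.slitPlane := by
    rw [Complex.mem_slitPlane_iff]; left
    rw [hwsu]
    have hre : ((s:ℂ) * u).re = s * u.re := by simp [Complex.mul_re]
    rw [hre]
    exact mul_pos hs0 (by linarith)
  have hboth : ∀ e : ℂ, ‖e‖ + 1 ≤ E → ‖u ^ e - 1‖ ≤ 3 * E * ‖u - 1‖ := by
    intro e hEe
    have hδe : δ ≤ 1/(3*(‖e‖+1)) := by
      rw [hδdef]
      exact one_div_le_one_div_of_le (by positivity) (by linarith)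
    have happ := cpow_near_one_est e u (huδ.trans hδe)
    refine happ.trans ?_
    have := mul_le_mul_of_nonneg_right (by linarith : 3*(‖e‖+1) ≤ 3*E) (norm_nonneg (u-1))
    linarith
  have hsc : (s ^ (1/α) : ℝ) = r := by rw [hsdef, one_div, Real.rpow_rpow_inv hr0.le hαne]
  have hscpow : (s:ℂ) ^ cc = (r:ℂ) := by
    rw [← hccast, ← Complex.ofReal_cpow hs0.le (1/α), hsc]
  have hhr : h r = (r:ℂ) * u ^ cc := by
    rw [hh r, ← hsdef, hwsu, ofReal_mul_cpow_split hs0 hu0, hscpow]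
  have hr1aγ : r ^ (1 + α*γ) = r * r ^ (α*γ) := by
    rw [Real.rpow_add hr0, Real.rpow_one]
  have hbound1 : ‖h r - (r:ℂ)‖ ≤ (3*E+2)*K * r ^ (1 + α*γ) := by
    rw [hhr]
    have he : (r:ℂ) * u ^ cc - (r:ℂ) = (r:ℂ) * (u ^ cc - 1) := by ring
    rw [he, norm_mul]
    have hnr : ‖(r:ℂ)‖ = r := by rw [Complex.norm_real]; exact abs_of_pos hr0
    rw [hnr]
    have h1 : ‖u ^ cc - 1‖ ≤ 3*E*(K * s^γ) := by
      refine (hboth cc hEcc).trans ?_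
      exact mul_le_mul_of_nonneg_left hu1 (by positivity)
    calc r * ‖u ^ cc - 1‖ ≤ r * (3*E*(K * s^γ)) := mul_le_mul_of_nonneg_left h1 hr0.le
      _ = 3*E*K * (r * r^(α*γ)) := by rw [hsγ]; ring
      _ ≤ (3*E+2)*K * (r * r^(α*γ)) := by
          have hnn : (0:ℝ) ≤ r * r^(α*γ) := by positivity
          have : 3*E*K ≤ (3*E+2)*K := by nlinarith
          exact mul_le_mul_of_nonneg_right this hnn
      _ = (3*E+2)*K * r ^ (1+α*γ) := by rw [hr1aγ]
  have h1d : HasDerivAt (fun x : ℝ => x ^ α) (α * r ^ (α - 1)) r :=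
    Real.hasDerivAt_rpow_const (Or.inl hr0.ne')
  have h3d : HasDerivAt (fun x : ℝ => w (x ^ α)) ((α * r ^ (α - 1)) • w' s) r := by
    have := (hwd s hsmem).scomp r h1d
    simpa [Function.comp_def] using this
  have h4d : HasDerivAt (fun z : ℂ => z ^ cc) (cc * w s ^ (cc - 1)) (w s) :=
    (Complex.hasStrictDerivAt_cpow_const hslit).hasDerivAt
  have h5d : HasDerivAt (fun x : ℝ => w (x ^ α) ^ cc)
      (cc * w s ^ (cc - 1) * ((α * r ^ (α - 1)) • w' s)) r := by
    have := h4d.comp r h3d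
    simpa [Function.comp_def] using this
  have hfun : (fun x : ℝ => w (x ^ α) ^ cc) = h := by
    funext x; rw [hh x]
  rw [hfun] at h5d
  refine ⟨hbound1, _, h5d, ?_⟩
  have hsplit : w s ^ (cc - 1) = ((s ^ ((1/α) - 1) : ℝ) : ℂ) * u ^ (cc - 1) := by
    rw [hwsu, ofReal_mul_cpow_split hs0 hu0]
    congr 1
    rw [Complex.ofReal_cpow hs0.le]
    congr 1
    rw [hccdef]; push_cast; ring
  have hreal : (1/α) * (s ^ ((1/α) - 1)) * (α * r ^ (α - 1)) = 1 := by
    have e1 : s ^ ((1/α) - 1) = r ^ (α * ((1/α) - 1)) := by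
      rw [hsdef]; exact (Real.rpow_mul hr0.le α ((1/α) - 1)).symm
    rw [e1, show (1/α) * r ^ (α * ((1/α) - 1)) * (α * r ^ (α - 1))
        = ((1/α)*α) * (r ^ (α * ((1/α) - 1)) * r ^ (α - 1)) from by ring,
      ← Real.rpow_add hr0]
    have e2 : α * ((1/α) - 1) + (α - 1) = 0 := by field_simp; ring
    rw [e2, Real.rpow_zero, one_div, inv_mul_cancel₀ hαne, mul_one]
  have hcast3 : (((1/α) * (s ^ ((1/α) - 1)) * (α * r ^ (α - 1)) : ℝ) : ℂ) = 1 := by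
    rw [hreal]; exact Complex.ofReal_one
  have hdeq : cc * w s ^ (cc - 1) * ((α * r ^ (α - 1)) • w' s) = u ^ (cc - 1) * w' s := by
    calc cc * w s ^ (cc - 1) * ((α * r ^ (α - 1)) • w' s)
        = (((1/α) * (s ^ ((1/α) - 1)) * (α * r ^ (α - 1)) : ℝ) : ℂ)
            * (u ^ (cc - 1) * w' s) := by
          rw [hsplit, ← hccast, Complex.real_smul]; push_cast; ring
      _ = u ^ (cc - 1) * w' s := by rw [hcast3, one_mul]
  rw [hdeq]
  have hucc1 : ‖u ^ (cc-1) - 1‖ ≤ 3*E*‖u-1‖ := hboth (cc-1) hEcc1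
  have huccK : ‖u ^ (cc-1) - 1‖ ≤ 3*E*(K * s^γ) :=
    hucc1.trans (mul_le_mul_of_nonneg_left hu1 (by positivity))
  have hucc2 : ‖u ^ (cc-1)‖ ≤ 2 := by
    have hle1 : ‖u ^ (cc-1) - 1‖ ≤ 1 := by
      refine hucc1.trans ?_
      have h5 : 3*E*‖u-1‖ ≤ 3*E*δ := mul_le_mul_of_nonneg_left huδ (by positivity)
      refine h5.trans ?_
      rw [hδdef]
      rw [mul_one_div]
      exact div_self_le_one _
    calc ‖u ^ (cc-1)‖ = ‖(u ^ (cc-1) - 1) + 1‖ := by congr 1; ring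
      _ ≤ ‖u ^ (cc-1) - 1‖ + ‖(1:ℂ)‖ := norm_add_le _ _
      _ ≤ 2 := by rw [norm_one]; linarith
  have hw's := hw' s hsmem
  calc ‖u ^ (cc-1) * w' s - 1‖
      = ‖u ^ (cc-1) * (w' s - 1) + (u ^ (cc-1) - 1)‖ := by congr 1; ring
    _ ≤ ‖u ^ (cc-1) * (w' s - 1)‖ + ‖u ^ (cc-1) - 1‖ := norm_add_le _ _
    _ = ‖u ^ (cc-1)‖ * ‖w' s - 1‖ + ‖u ^ (cc-1) - 1‖ := by rw [norm_mul]
    _ ≤ 2 * (K * s^γ) + 3*E*(K * s^γ) := by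
        have h6 := mul_le_mul hucc2 hw's (norm_nonneg _) (by norm_num)
        linarith
    _ = (3*E+2)*K * s^γ := by ring
    _ = (3*E+2)*K * r^(α*γ) := by rw [hsγ]
end
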